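/- arXiv:1007.5507 — 8 statements merged into one kernel-verified Lean document; each statement's English description precedes it below -/
import Mathlib

section
/- For every $r>0$, $\varepsilon>0$ and $0<\beta<2$, the quantity $f^{\varepsilon}(r) = \frac{1}{4\varepsilon^2}\big(2r^{\beta} - |r-2\varepsilon|^{\beta} - (r+2\varepsilon)^{\beta}\big)$ satisfies $|f^{\varepsilon}(r)| \le 64\, r^{\beta-2}$. -/
open Real

/-- MVT: derivative bound gives Lipschitz bound (real abs version). -/
lemma my_lip {f f' : ℝ → ℝ} {s : Set ℝ} (hs : Convex ℝ s)
    (hf : ∀ x ∈ s, HasDerivAt f (f' x) x) {C : ℝ}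
    (hb : ∀ x ∈ s, |f' x| ≤ C) {x y : ℝ} (hx : x ∈ s) (hy : y ∈ s) :
    |f y - f x| ≤ C * |y - x| := by
  have := hs.norm_image_sub_le_of_norm_hasDerivWithin_le
    (fun z hz => (hf z hz).hasDerivWithinAt) (fun z hz => by simpa [Real.norm_eq_abs] using hb z hz) hx hy
  simpa [Real.norm_eq_abs] using this

theorem stmt0 (r ε β : ℝ) (hr : 0 < r) (hε : 0 < ε) (hβ0 : 0 < β) (hβ2 : β < 2) :
    |(2 * r ^ β - |r - 2 * ε| ^ β - (r + 2 * ε) ^ β) / (4 * ε ^ 2)| ≤ 64 * r ^ (β - 2) := by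
  set h : ℝ := 2 * ε with hh_def
  have hh0 : 0 < h := by positivity
  have h4ε : (4 : ℝ) * ε ^ 2 = h ^ 2 := by rw [hh_def]; ring
  have hrβ2 : 0 < r ^ (β - 2) := Real.rpow_pos_of_pos hr _
  -- auxiliary: x ≥ r/2 → x^(β-2) ≤ 4 r^(β-2)
  have haux : ∀ x : ℝ, r / 2 ≤ x → x ^ (β - 2) ≤ 4 * r ^ (β - 2) := by
    intro x hx
    have h1 : x ^ (β - 2) ≤ (r / 2) ^ (β - 2) :=
      Real.rpow_le_rpow_of_nonpos (by positivity) hx (by linarith)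
    have h2 : (r / 2 : ℝ) ^ (β - 2) = (2:ℝ) ^ (2 - β) * r ^ (β - 2) := by
      rw [show r / 2 = 2⁻¹ * r by ring, Real.mul_rpow (by norm_num) hr.le,
        Real.inv_rpow (by norm_num), ← Real.rpow_neg (by norm_num)]
      ring_nf
    have h3 : (2:ℝ) ^ (2 - β) ≤ 4 := by
      calc (2:ℝ) ^ (2 - β) ≤ 2 ^ (2:ℝ) :=
        Real.rpow_le_rpow_of_exponent_le one_le_two (by linarith)
      _ = 4 := by
        rw [show (2:ℝ) = ((2:ℕ):ℝ) by norm_num, Real.rpow_natCast]; norm_num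
    nlinarith
  rcases le_or_gt h (r / 2) with hcase | hcase
  · -- smooth case: h ≤ r/2, use MVT twice
    set a : ℝ := r - h with ha_def
    have ha2 : r / 2 ≤ a := by rw [ha_def]; linarith
    have ha0 : 0 < a := by linarith
    set ψ : ℝ → ℝ := fun x => β * x ^ (β - 1) with hψ_def
    set K : ℝ := 2 * a ^ (β - 2) with hK_def
    have hK0 : 0 ≤ K := by positivity
    -- ψ is K-Lipschitz on Ici a
    have ψlip : ∀ x ∈ Set.Ici a, ∀ y ∈ Set.Ici a, |ψ y - ψ x| ≤ K * |y - x| := by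
      intro x hx y hy
      refine my_lip (convex_Ici a) (f' := fun x => β * ((β - 1) * x ^ (β - 1 - 1))) ?_ ?_ hx hy
      · intro z hz
        have hz0 : 0 < z := lt_of_lt_of_le ha0 hz
        exact (Real.hasDerivAt_rpow_const (Or.inl hz0.ne')).const_mul β
      · intro z hz
        have hz0 : 0 < z := lt_of_lt_of_le ha0 hz
        have hzb : z ^ (β - 2) ≤ a ^ (β - 2) :=
          Real.rpow_le_rpow_of_nonpos ha0 hz (by linarith)
        have hzb0 : (0:ℝ) ≤ z ^ (β - 2) := (Real.rpow_pos_of_pos hz0 _).le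
        have : |β * ((β - 1) * z ^ (β - 1 - 1))| = β * |β - 1| * z ^ (β - 2) := by
          rw [show β - 1 - 1 = β - 2 by ring, abs_mul, abs_mul,
            abs_of_pos hβ0, abs_of_nonneg hzb0]
          ring
        rw [this, hK_def]
        have hb1 : |β - 1| ≤ 1 := abs_le.mpr ⟨by linarith, by linarith⟩
        have s1 : β * |β - 1| ≤ 2 := by nlinarith [abs_nonneg (β - 1)]
        have s2 : β * |β - 1| * z ^ (β - 2) ≤ 2 * z ^ (β - 2) :=
          mul_le_mul_of_nonneg_right s1 hzb0
        have s3 : 2 * z ^ (β - 2) ≤ 2 * a ^ (β - 2) := by linarith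
        linarith
    -- φ t = (r+t)^β + (r-t)^β - 2 r^β, derivative ψ(r+t) - ψ(r-t)
    set φ : ℝ → ℝ := fun t => (r + t) ^ β + (r - t) ^ β - 2 * r ^ β with hφ_def
    have hφd : ∀ t ∈ Set.Icc (0:ℝ) h, HasDerivAt φ (ψ (r + t) - ψ (r - t)) t := by
      intro t ht
      have h1 : (0:ℝ) < r + t := by have := ht.1; linarith
      have h2 : (0:ℝ) < r - t := by have := ht.2; linarith
      have d1 : HasDerivAt (fun t : ℝ => (r + t) ^ β) (β * (r + t) ^ (β - 1) * 1) t :=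
        (Real.hasDerivAt_rpow_const (Or.inl h1.ne')).comp t ((hasDerivAt_id t).const_add r)
      have d2 : HasDerivAt (fun t : ℝ => (r - t) ^ β) (β * (r - t) ^ (β - 1) * (-1)) t :=
        (Real.hasDerivAt_rpow_const (Or.inl h2.ne')).comp t ((hasDerivAt_id t).const_sub r)
      have := (d1.add d2).sub_const (2 * r ^ β)
      refine this.congr_deriv ?_
      rw [hψ_def]; ring
    have hφbound : |φ h - φ 0| ≤ (K * (2 * h)) * |h - 0| := by
      refine my_lip (convex_Icc 0 h) hφd ?_ (Set.left_mem_Icc.mpr hh0.le)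
        (Set.right_mem_Icc.mpr hh0.le)
      intro t ht
      have h1 : r + t ∈ Set.Ici a := by simp only [Set.mem_Ici, ha_def]; have := ht.1; linarith
      have h2 : r - t ∈ Set.Ici a := by simp only [Set.mem_Ici, ha_def]; have := ht.2; linarith
      have := ψlip _ h2 _ h1
      have habs : |(r + t) - (r - t)| = 2 * t := by
        rw [show (r + t) - (r - t) = 2 * t by ring, abs_of_nonneg (by linarith [ht.1])]
      rw [habs] at this
      have : |ψ (r + t) - ψ (r - t)| ≤ K * (2 * t) := this
      have ht2 : K * (2 * t) ≤ K * (2 * h) := by nlinarith [ht.2]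
      linarith
    have hφ0 : φ 0 = 0 := by rw [hφ_def]; simp; ring
    have hNφ : 2 * r ^ β - |r - h| ^ β - (r + h) ^ β = -(φ h) := by
      rw [hφ_def, abs_of_nonneg (by linarith : (0:ℝ) ≤ r - h)]; ring
    rw [hNφ, h4ε, abs_div, abs_neg]
    rw [hφ0, sub_zero, sub_zero, abs_of_pos hh0] at hφbound
    have hKa : K ≤ 8 * r ^ (β - 2) := by
      have := haux a ha2
      rw [hK_def]; linarith
    rw [abs_of_pos (by positivity : (0:ℝ) < h ^ 2)]
    rw [div_le_iff₀ (by positivity)]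
    calc |φ h| ≤ K * (2 * h) * h := hφbound
    _ ≤ 8 * r ^ (β - 2) * (2 * h) * h := by nlinarith
    _ = 16 * r ^ (β - 2) * h ^ 2 := by ring
    _ ≤ 64 * r ^ (β - 2) * h ^ 2 := by nlinarith
  · -- rough case: r/2 < h
    have hrh : r < 2 * h := by linarith
    have hβ0' : (0:ℝ) ≤ β := hβ0.le
    have b1 : r ^ β ≤ 4 * h ^ β := by
      calc r ^ β ≤ (2 * h) ^ β := Real.rpow_le_rpow hr.le hrh.le hβ0'
      _ = (2:ℝ) ^ β * h ^ β := Real.mul_rpow (by norm_num) hh0.le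
      _ ≤ 4 * h ^ β := by
          have h2β : (2:ℝ) ^ β ≤ 4 := by
            calc (2:ℝ) ^ β ≤ 2 ^ (2:ℝ) :=
              Real.rpow_le_rpow_of_exponent_le one_le_two hβ2.le
            _ = 4 := by rw [show (2:ℝ) = ((2:ℕ):ℝ) by norm_num, Real.rpow_natCast]; norm_num
          nlinarith [Real.rpow_pos_of_pos hh0 β]
    have b2 : |r - h| ^ β ≤ h ^ β :=
      Real.rpow_le_rpow (abs_nonneg _) (abs_le.mpr ⟨by linarith, by linarith⟩) hβ0'
    have b3 : (r + h) ^ β ≤ 9 * h ^ β := by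
      calc (r + h) ^ β ≤ (3 * h) ^ β := Real.rpow_le_rpow (by linarith) (by linarith) hβ0'
      _ = (3:ℝ) ^ β * h ^ β := Real.mul_rpow (by norm_num) hh0.le
      _ ≤ 9 * h ^ β := by
          have h3β : (3:ℝ) ^ β ≤ 9 := by
            calc (3:ℝ) ^ β ≤ 3 ^ (2:ℝ) :=
              Real.rpow_le_rpow_of_exponent_le (by norm_num) hβ2.le
            _ = 9 := by rw [show (2:ℝ) = ((2:ℕ):ℝ) by norm_num, Real.rpow_natCast]; norm_num
          nlinarith [Real.rpow_pos_of_pos hh0 β]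
    have hX0 : (0:ℝ) ≤ |r - h| ^ β := Real.rpow_nonneg (abs_nonneg _) _
    have hr0 : (0:ℝ) ≤ r ^ β := Real.rpow_nonneg hr.le _
    have hrp0 : (0:ℝ) ≤ (r + h) ^ β := Real.rpow_nonneg (by linarith) _
    have hN : |2 * r ^ β - |r - h| ^ β - (r + h) ^ β| ≤ 10 * h ^ β := by
      rw [abs_le]
      constructor <;> nlinarith
    rw [h4ε, abs_div, abs_of_pos (by positivity : (0:ℝ) < h ^ 2), div_le_iff₀ (by positivity)]
    have hhβ2 : h ^ (β - 2) ≤ 4 * r ^ (β - 2) := haux h hcase.le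
    have key : h ^ β = h ^ (β - 2) * h ^ 2 := by
      rw [Real.rpow_sub hh0, show ((2:ℝ)) = ((2:ℕ):ℝ) by norm_num, Real.rpow_natCast]
      field_simp
    calc |2 * r ^ β - |r - h| ^ β - (r + h) ^ β| ≤ 10 * h ^ β := hN
    _ = 10 * h ^ (β - 2) * h ^ 2 := by rw [key]; ring
    _ ≤ 64 * r ^ (β - 2) * h ^ 2 := by nlinarith
end

section
/- Let $0<\beta<1$, $s>0$, $s\le T$, and let $\phi \in C^{\alpha}([0,T])$ with $\alpha > 1-\beta$. Then there is a constant $C$ depending only on $\beta$ and $\alpha$ such that $\big|\int_0^s \phi(r)\, f^{\varepsilon}(r)\, dr\big| \le C\big(\|\phi\|_{\infty}\, s^{\beta-1} + \|\phi\|_{\alpha}\, s^{\alpha+\beta-1}\big)$ for all $\varepsilon>0$, where $f^{\varepsilon}(r) = \frac{1}{4\varepsilon^2}\big(2r^{\beta} - |r-2\varepsilon|^{\beta} - (r+2\varepsilon)^{\beta}\big)$. -/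
open Real MeasureTheory
open scoped NNReal

-- FTC for rpow on positive intervals
lemma my_ftc_rpow (p : ℝ) {a b : ℝ} (hb : 0 < b) (hba : b ≤ a) :
    a ^ p - b ^ p = ∫ x in b..a, p * x ^ (p - 1) := by
  have hderiv : ∀ x ∈ Set.uIcc b a, HasDerivAt (fun y : ℝ => y ^ p) (p * x ^ (p - 1)) x := by
    intro x hx
    rw [Set.uIcc_of_le hba] at hx
    exact Real.hasDerivAt_rpow_const (Or.inl (by nlinarith [hx.1]))
  have hint : IntervalIntegrable (fun x : ℝ => p * x ^ (p - 1)) volume b a := by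
    apply ContinuousOn.intervalIntegrable
    apply ContinuousOn.mul continuousOn_const
    intro x hx
    rw [Set.uIcc_of_le hba] at hx
    exact (Real.continuousAt_rpow_const x (p - 1) (Or.inl (by nlinarith [hx.1]))).continuousWithinAt
  rw [intervalIntegral.integral_eq_sub_of_hasDerivAt hderiv hint]

-- gradient bound
lemma my_rpow_diff_bound (p : ℝ) (hp : p ≤ 1) {a b : ℝ} (hb : 0 < b) (hba : b ≤ a) :
    |a ^ p - b ^ p| ≤ |p| * b ^ (p - 1) * (a - b) := by
  rw [my_ftc_rpow p hb hba]
  have h := intervalIntegral.norm_integral_le_of_norm_le_const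
    (f := fun x : ℝ => p * x ^ (p - 1)) (a := b) (b := a) (C := |p| * b ^ (p - 1)) ?_
  · rw [Real.norm_eq_abs] at h
    calc |∫ x in b..a, p * x ^ (p - 1)| ≤ |p| * b ^ (p - 1) * |a - b| := h
      _ = |p| * b ^ (p - 1) * (a - b) := by
          rw [abs_of_nonneg (show (0:ℝ) ≤ a - b by linarith)]
  · intro x hx
    rw [Set.uIoc_of_le hba] at hx
    have hx0 : 0 < x := lt_of_lt_of_le hb hx.1.le
    rw [Real.norm_eq_abs, abs_mul, abs_of_nonneg (Real.rpow_nonneg hx0.le (p-1))]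
    exact mul_le_mul_of_nonneg_left
      (Real.rpow_le_rpow_of_nonpos hb hx.1.le (by linarith)) (abs_nonneg p)

-- subadditivity of rpow for exponent in [0,1]
lemma my_rpow_subadd {p x y : ℝ} (hx : 0 ≤ x) (hy : 0 ≤ y) (hp : 0 ≤ p) (hp1 : p ≤ 1) :
    (x + y) ^ p ≤ x ^ p + y ^ p := by
  have h := NNReal.rpow_add_le_add_rpow x.toNNReal y.toNNReal hp hp1
  have h2 := NNReal.coe_le_coe.mpr h
  push_cast [NNReal.coe_rpow] at h2
  rwa [Real.coe_toNNReal x hx, Real.coe_toNNReal y hy] at h2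

-- Hölder bound for rpow
lemma my_rpow_holder {p a b : ℝ} (hp : 0 ≤ p) (hp1 : p ≤ 1) (ha : 0 ≤ a) (hb : 0 ≤ b) :
    |a ^ p - b ^ p| ≤ |a - b| ^ p := by
  rcases le_total b a with hba | hab
  · have h1 : a ^ p ≤ b ^ p + (a - b) ^ p := by
      have := my_rpow_subadd hb (by linarith : (0:ℝ) ≤ a - b) hp hp1
      simpa [add_sub_cancel] using this
    have h2 : b ^ p ≤ a ^ p := Real.rpow_le_rpow hb hba hp
    rw [abs_of_nonneg (by linarith), abs_of_nonneg (by linarith)]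
    linarith
  · have h1 : b ^ p ≤ a ^ p + (b - a) ^ p := by
      have := my_rpow_subadd ha (by linarith : (0:ℝ) ≤ b - a) hp hp1
      simpa [add_sub_cancel] using this
    have h2 : a ^ p ≤ b ^ p := Real.rpow_le_rpow ha hab hp
    rw [abs_of_nonpos (by linarith), abs_of_nonpos (by linarith)]
    rw [neg_sub, neg_sub]
    linarith

-- second difference bound
lemma my_second_diff (p : ℝ) (hp : p ≤ 2) {x h : ℝ} (hh : 0 < h) (hxh : 0 < x - h) :
    |2 * x ^ p - (x - h) ^ p - (x + h) ^ p| ≤ |p| * |p - 1| * (x - h) ^ (p - 2) * h ^ 2 := by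
  have hx : 0 < x := by linarith
  have e1 : x ^ p - (x - h) ^ p = ∫ t in (x - h)..x, p * t ^ (p - 1) :=
    my_ftc_rpow p hxh (by linarith)
  have e2 : (x + h) ^ p - x ^ p = ∫ t in (x - h)..x, p * (t + h) ^ (p - 1) := by
    rw [my_ftc_rpow p hx (by linarith : x ≤ x + h)]
    have e2' : (∫ t in (x - h)..x, p * (t + h) ^ (p - 1))
        = ∫ t in (x - h) + h..x + h, p * t ^ (p - 1) :=
      intervalIntegral.integral_comp_add_right (fun t => p * t ^ (p - 1)) h
    rw [show x - h + h = x by ring] at e2'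
    exact e2'.symm
  have int1 : IntervalIntegrable (fun t : ℝ => p * t ^ (p - 1)) volume (x - h) x := by
    apply ContinuousOn.intervalIntegrable
    apply ContinuousOn.mul continuousOn_const
    intro t ht
    rw [Set.uIcc_of_le (by linarith : x - h ≤ x)] at ht
    exact (Real.continuousAt_rpow_const t (p - 1) (Or.inl (by nlinarith [ht.1]))).continuousWithinAt
  have int2 : IntervalIntegrable (fun t : ℝ => p * (t + h) ^ (p - 1)) volume (x - h) x := by
    apply ContinuousOn.intervalIntegrable
    apply ContinuousOn.mul continuousOn_const
    intro t ht
    rw [Set.uIcc_of_le (by linarith : x - h ≤ x)] at ht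
    exact (ContinuousAt.rpow_const ((continuous_id.add continuous_const).continuousAt)
      (Or.inl (by nlinarith [ht.1] : (t : ℝ) + h ≠ 0))).continuousWithinAt
  have key : 2 * x ^ p - (x - h) ^ p - (x + h) ^ p
      = ∫ t in (x - h)..x, (p * t ^ (p - 1) - p * (t + h) ^ (p - 1)) := by
    rw [intervalIntegral.integral_sub int1 int2, ← e1, ← e2]; ring
  rw [key]
  have hbd := intervalIntegral.norm_integral_le_of_norm_le_const
    (f := fun t : ℝ => p * t ^ (p - 1) - p * (t + h) ^ (p - 1)) (a := x - h) (b := x)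
    (C := |p| * |p - 1| * (x - h) ^ (p - 2) * h) ?_
  · rw [Real.norm_eq_abs] at hbd
    calc |∫ t in (x-h)..x, (p * t ^ (p - 1) - p * (t + h) ^ (p - 1))|
        ≤ |p| * |p - 1| * (x - h) ^ (p - 2) * h * |x - (x - h)| := hbd
      _ = |p| * |p - 1| * (x - h) ^ (p - 2) * h ^ 2 := by
          rw [show x - (x - h) = h by ring, abs_of_nonneg hh.le]; ring
  · intro t ht
    rw [Set.uIoc_of_le (by linarith : x - h ≤ x)] at ht
    have ht0 : 0 < t := lt_trans hxh ht.1
    have hd : |t ^ (p - 1) - (t + h) ^ (p - 1)|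
        ≤ |p - 1| * t ^ (p - 2) * h := by
      have := my_rpow_diff_bound (p - 1) (by linarith) ht0 (by linarith : t ≤ t + h)
      calc |t ^ (p-1) - (t+h) ^ (p-1)| = |(t+h) ^ (p-1) - t ^ (p-1)| := abs_sub_comm _ _
        _ ≤ |p - 1| * t ^ (p - 1 - 1) * (t + h - t) := this
        _ = |p - 1| * t ^ (p - 2) * h := by
            rw [show p - 1 - 1 = p - 2 by ring, show t + h - t = h by ring]
    simp only [Real.norm_eq_abs]
    rw [show p * t ^ (p - 1) - p * (t + h) ^ (p - 1)
      = p * (t ^ (p - 1) - (t + h) ^ (p - 1)) by ring, abs_mul]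
    calc |p| * |t ^ (p - 1) - (t + h) ^ (p - 1)| ≤ |p| * (|p - 1| * t ^ (p - 2) * h) :=
          mul_le_mul_of_nonneg_left hd (abs_nonneg p)
      _ ≤ |p| * (|p - 1| * (x - h) ^ (p - 2) * h) := by
          apply mul_le_mul_of_nonneg_left _ (abs_nonneg p)
          apply mul_le_mul_of_nonneg_right _ hh.le
          exact mul_le_mul_of_nonneg_left
            (Real.rpow_le_rpow_of_nonpos hxh ht.1.le (by linarith)) (abs_nonneg _)
      _ = |p| * |p - 1| * (x - h) ^ (p - 2) * h := by ring

-- global bound on the numerator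
lemma my_num_global {β ε r : ℝ} (hβ0 : 0 < β) (hβ1 : β ≤ 1) (hε : 0 < ε) (hr : 0 ≤ r) :
    |2 * r ^ β - |r - 2 * ε| ^ β - (r + 2 * ε) ^ β| ≤ 2 * (2 * ε) ^ β := by
  have h1 : |r ^ β - |r - 2 * ε| ^ β| ≤ (2 * ε) ^ β := by
    have key : |r - (|r - 2 * ε|)| ≤ 2 * ε := by
      rcases le_total (2 * ε) r with hc | hc
      · rw [abs_of_nonneg (show (0:ℝ) ≤ r - 2 * ε by linarith),
          show r - (r - 2 * ε) = 2 * ε by ring, abs_of_nonneg (by linarith)]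
      · rw [abs_of_nonpos (show r - 2 * ε ≤ 0 by linarith), abs_le]
        constructor <;> linarith
    calc |r ^ β - |r - 2 * ε| ^ β| ≤ |r - (|r - 2 * ε|)| ^ β :=
          my_rpow_holder hβ0.le hβ1 hr (abs_nonneg _)
      _ ≤ (2 * ε) ^ β := Real.rpow_le_rpow (abs_nonneg _) key hβ0.le
  have h2 : |r ^ β - (r + 2 * ε) ^ β| ≤ (2 * ε) ^ β := by
    calc |r ^ β - (r + 2 * ε) ^ β| ≤ |r - (r + 2 * ε)| ^ β :=
          my_rpow_holder hβ0.le hβ1 hr (by linarith)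
      _ = (2 * ε) ^ β := by rw [show r - (r + 2*ε) = -(2*ε) by ring, abs_neg,
            abs_of_nonneg (by linarith)]
  calc |2 * r ^ β - |r - 2 * ε| ^ β - (r + 2 * ε) ^ β|
      = |(r ^ β - |r - 2 * ε| ^ β) + (r ^ β - (r + 2 * ε) ^ β)| := by ring_nf
    _ ≤ |r ^ β - |r - 2 * ε| ^ β| + |r ^ β - (r + 2 * ε) ^ β| := abs_add_le _ _
    _ ≤ 2 * (2 * ε) ^ β := by linarith

lemma my_num_cont {β ε : ℝ} (hβ0 : 0 < β) :
    Continuous (fun r : ℝ => 2 * r ^ β - |r - 2 * ε| ^ β - (r + 2 * ε) ^ β) := by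
  have c0 : Continuous fun x : ℝ => x ^ β := Real.continuous_rpow_const hβ0.le
  exact ((continuous_const.mul c0).sub
    (c0.comp (continuous_abs.comp (continuous_id.sub continuous_const)))).sub
    (c0.comp (continuous_id.add continuous_const))

lemma my_phi_cont {T α Cα : ℝ} {φ : ℝ → ℝ} (hα : 0 < α)
    (hH : ∀ u ∈ Set.Icc (0 : ℝ) T, ∀ v ∈ Set.Icc (0 : ℝ) T, |φ u - φ v| ≤ Cα * |u - v| ^ α) :
    ContinuousOn φ (Set.Icc 0 T) := by
  intro u hu
  have h1 : Filter.Tendsto (fun v => Cα * |v - u| ^ α) (nhdsWithin u (Set.Icc 0 T)) (nhds 0) := by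
    have : Filter.Tendsto (fun v : ℝ => Cα * |v - u| ^ α) (nhds u) (nhds (Cα * |u - u| ^ α)) := by
      apply Filter.Tendsto.const_mul
      exact ((Real.continuous_rpow_const hα.le).comp
        (continuous_abs.comp (continuous_id.sub continuous_const))).tendsto u
    rw [show |u - u| = 0 by simp, Real.zero_rpow hα.ne', mul_zero] at this
    exact this.mono_left nhdsWithin_le_nhds
  rw [ContinuousWithinAt, tendsto_iff_dist_tendsto_zero]
  apply squeeze_zero' (Filter.Eventually.of_forall fun v => dist_nonneg)
    (eventually_nhdsWithin_of_forall fun v hv => ?_) h1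
  rw [Real.dist_eq]
  exact hH v hv u hu

lemma my_int_num {β s ε : ℝ} (hβ0 : 0 < β) (hε : 0 < ε) (h2ε : 2 * ε < s) :
    (∫ r in (0:ℝ)..s, (2 * r ^ β - |r - 2 * ε| ^ β - (r + 2 * ε) ^ β))
      = (2 * s ^ (β + 1) - (s - 2 * ε) ^ (β + 1) - (s + 2 * ε) ^ (β + 1)) / (β + 1) := by
  have hβ1 : -1 < β := by linarith
  have c0 : Continuous fun x : ℝ => x ^ β := Real.continuous_rpow_const hβ0.le
  have cA : Continuous fun r : ℝ => |r - 2 * ε| ^ β :=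
    c0.comp (continuous_abs.comp (continuous_id.sub continuous_const))
  have cB : Continuous fun r : ℝ => (r + 2 * ε) ^ β :=
    c0.comp (continuous_id.add continuous_const)
  have i1 : IntervalIntegrable (fun r : ℝ => 2 * r ^ β) volume 0 s :=
    (continuous_const.mul c0).intervalIntegrable _ _
  have i2 : IntervalIntegrable (fun r : ℝ => |r - 2 * ε| ^ β) volume 0 s :=
    cA.intervalIntegrable _ _
  have i3 : IntervalIntegrable (fun r : ℝ => (r + 2 * ε) ^ β) volume 0 s :=
    cB.intervalIntegrable _ _
  rw [intervalIntegral.integral_sub (i1.sub i2) i3, intervalIntegral.integral_sub i1 i2]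
  have E1 : (∫ r in (0:ℝ)..s, 2 * r ^ β) = 2 * s ^ (β + 1) / (β + 1) := by
    rw [intervalIntegral.integral_const_mul, integral_rpow (Or.inl hβ1),
      Real.zero_rpow (by linarith : β + 1 ≠ 0)]
    ring
  have E3 : (∫ r in (0:ℝ)..s, (r + 2 * ε) ^ β)
      = ((s + 2 * ε) ^ (β + 1) - (2 * ε) ^ (β + 1)) / (β + 1) := by
    have := intervalIntegral.integral_comp_add_right (a := (0:ℝ)) (b := s)
      (fun x : ℝ => x ^ β) (2 * ε)
    rw [this, show (0:ℝ) + 2 * ε = 2 * ε by ring, integral_rpow (Or.inl hβ1)]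
  have E2 : (∫ r in (0:ℝ)..s, |r - 2 * ε| ^ β)
      = (2 * ε) ^ (β + 1) / (β + 1) + (s - 2 * ε) ^ (β + 1) / (β + 1) := by
    have iA : IntervalIntegrable (fun r : ℝ => |r - 2 * ε| ^ β) volume 0 (2 * ε) :=
      cA.intervalIntegrable _ _
    have iB : IntervalIntegrable (fun r : ℝ => |r - 2 * ε| ^ β) volume (2 * ε) s :=
      cA.intervalIntegrable _ _
    rw [← intervalIntegral.integral_add_adjacent_intervals iA iB]
    have P1 : (∫ r in (0:ℝ)..(2 * ε), |r - 2 * ε| ^ β) = (2 * ε) ^ (β + 1) / (β + 1) := by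
      have hcg : (∫ r in (0:ℝ)..(2 * ε), |r - 2 * ε| ^ β)
          = ∫ r in (0:ℝ)..(2 * ε), (2 * ε - r) ^ β := by
        apply intervalIntegral.integral_congr
        intro r hr
        rw [Set.uIcc_of_le (by linarith : (0:ℝ) ≤ 2 * ε)] at hr
        show |r - 2 * ε| ^ β = (2 * ε - r) ^ β
        rw [abs_of_nonpos (by linarith [hr.2] : r - 2 * ε ≤ 0)]
        norm_num
      rw [hcg]
      have := intervalIntegral.integral_comp_sub_left (a := (0:ℝ)) (b := 2 * ε)
        (fun x : ℝ => x ^ β) (2 * ε)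
      rw [this, show (2:ℝ) * ε - 2 * ε = 0 by ring, show (2:ℝ) * ε - 0 = 2 * ε by ring,
        integral_rpow (Or.inl hβ1), Real.zero_rpow (by linarith : β + 1 ≠ 0)]
      ring
    have P2 : (∫ r in (2 * ε)..s, |r - 2 * ε| ^ β) = (s - 2 * ε) ^ (β + 1) / (β + 1) := by
      have hcg : (∫ r in (2 * ε)..s, |r - 2 * ε| ^ β)
          = ∫ r in (2 * ε)..s, (r - 2 * ε) ^ β := by
        apply intervalIntegral.integral_congr
        intro r hr
        rw [Set.uIcc_of_le (by linarith : 2 * ε ≤ s)] at hr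
        show |r - 2 * ε| ^ β = (r - 2 * ε) ^ β
        rw [abs_of_nonneg (by linarith [hr.1] : (0:ℝ) ≤ r - 2 * ε)]
      rw [hcg]
      have := intervalIntegral.integral_comp_sub_right (a := 2 * ε) (b := s)
        (fun x : ℝ => x ^ β) (2 * ε)
      rw [this, show (2:ℝ) * ε - 2 * ε = 0 by ring, integral_rpow (Or.inl hβ1),
        Real.zero_rpow (by linarith : β + 1 ≠ 0)]
      ring
    rw [P1, P2]
  rw [E1, E2, E3]
  ring


set_option maxHeartbeats 2000000 in
theorem stmt3 (β α : ℝ) (hβ0 : 0 < β) (hβ1 : β < 1) (hα : 1 - β < α) :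
    ∃ C > 0, ∀ (T s : ℝ) (φ : ℝ → ℝ) (Mφ Cα ε : ℝ),
      0 < s → s ≤ T → 0 < ε →
      (∀ u ∈ Set.Icc (0 : ℝ) T, |φ u| ≤ Mφ) →
      (∀ u ∈ Set.Icc (0 : ℝ) T, ∀ v ∈ Set.Icc (0 : ℝ) T,
        |φ u - φ v| ≤ Cα * |u - v| ^ α) →
      |∫ r in (0:ℝ)..s,
          φ r * ((2 * r ^ β - |r - 2 * ε| ^ β - (r + 2 * ε) ^ β) / (4 * ε ^ 2))|
        ≤ C * (Mφ * s ^ (β - 1) + Cα * s ^ (α + β - 1)) := by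
  have hα0 : 0 < α := by linarith
  have hαβ : 0 < α + β - 1 := by linarith
  set c1 : ℝ := 2 ^ (β - 1) * 4 ^ (2 - β) with hc1def
  set c2 : ℝ := β * 2 ^ (1 - β) with hc2def
  set c3 : ℝ := 2 ^ (β - 1) * 4 ^ (α + 1) / (α + 1) with hc3def
  set c4 : ℝ := β * (1 - β) * 2 ^ (2 - β) / (α + β - 1) with hc4def
  have hc1 : 0 < c1 := mul_pos (Real.rpow_pos_of_pos two_pos _) (Real.rpow_pos_of_pos four_pos _)
  have hc2 : 0 < c2 := mul_pos hβ0 (Real.rpow_pos_of_pos two_pos _)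
  have hc3 : 0 < c3 := div_pos
    (mul_pos (Real.rpow_pos_of_pos two_pos _) (Real.rpow_pos_of_pos four_pos _)) (by linarith)
  have hc4 : 0 < c4 := div_pos
    (mul_pos (mul_pos hβ0 (by linarith)) (Real.rpow_pos_of_pos two_pos _)) hαβ
  refine ⟨c1 + c2 + c3 + c4, by linarith, ?_⟩
  intro T s φ Mφ Cα ε hs hsT hε hM hH
  have hMφ0 : 0 ≤ Mφ := le_trans (abs_nonneg _) (hM 0 ⟨le_refl 0, by linarith⟩)
  have hCα0 : 0 ≤ Cα := by
    have h := hH s ⟨hs.le, hsT⟩ 0 ⟨le_refl 0, by linarith⟩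
    have hsα : 0 < |s - 0| ^ α := Real.rpow_pos_of_pos (by rw [sub_zero, abs_of_pos hs]; exact hs) α
    nlinarith [abs_nonneg (φ s - φ 0)]
  have hX : 0 ≤ Mφ * s ^ (β - 1) := mul_nonneg hMφ0 (Real.rpow_nonneg hs.le _)
  have hY : 0 ≤ Cα * s ^ (α + β - 1) := mul_nonneg hCα0 (Real.rpow_nonneg hs.le _)
  -- global bound on the kernel
  have hGval : 2 * (2 * ε) ^ β / (4 * ε ^ 2) = 2 ^ (β - 1) * ε ^ (β - 2) := by
    rw [Real.mul_rpow (by norm_num) hε.le, Real.rpow_sub two_pos, Real.rpow_one,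
      Real.rpow_sub hε, show ((2:ℝ)) = ((2:ℕ):ℝ) by norm_num, Real.rpow_natCast]
    field_simp
    ring
  have hg_glob : ∀ t : ℝ, 0 ≤ t →
      |(2 * t ^ β - |t - 2 * ε| ^ β - (t + 2 * ε) ^ β) / (4 * ε ^ 2)|
        ≤ 2 ^ (β - 1) * ε ^ (β - 2) := by
    intro t ht
    rw [abs_div, abs_of_nonneg (by positivity : (0:ℝ) ≤ 4 * ε ^ 2), ← hGval]
    apply div_le_div_of_nonneg_right ?_ (by positivity)
    · exact my_num_global hβ0 hβ1.le hε ht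
  rcases le_or_gt s (4 * ε) with hcase | hcase
  · -- small s: use the global bound
    have hb := intervalIntegral.norm_integral_le_of_norm_le_const
      (f := fun r : ℝ => φ r * ((2 * r ^ β - |r - 2 * ε| ^ β - (r + 2 * ε) ^ β) / (4 * ε ^ 2)))
      (a := (0:ℝ)) (b := s) (C := Mφ * (2 ^ (β - 1) * ε ^ (β - 2))) ?_
    · rw [Real.norm_eq_abs, sub_zero, abs_of_pos hs] at hb
      have hεs : ε ^ (β - 2) ≤ s ^ (β - 2) * 4 ^ (2 - β) := by
        have h1 : ε ^ (β - 2) ≤ (s / 4) ^ (β - 2) :=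
          Real.rpow_le_rpow_of_nonpos (by linarith) (by linarith) (by linarith)
        have h2 : ((s / 4 : ℝ)) ^ (β - 2) = s ^ (β - 2) * 4 ^ (2 - β) := by
          rw [Real.div_rpow hs.le (by norm_num), show (2:ℝ) - β = -(β - 2) by ring,
            Real.rpow_neg (by norm_num), div_eq_mul_inv]
        linarith [h1.trans_eq h2]
      have hA : Mφ * (2 ^ (β - 1) * ε ^ (β - 2)) * s
          ≤ Mφ * (2 ^ (β - 1) * (s ^ (β - 2) * 4 ^ (2 - β))) * s := by
        apply mul_le_mul_of_nonneg_right _ hs.le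
        apply mul_le_mul_of_nonneg_left _ hMφ0
        exact mul_le_mul_of_nonneg_left hεs (Real.rpow_nonneg two_pos.le _)
      have hspow : s ^ (β - 2) * s = s ^ (β - 1) := by
        rw [show β - 1 = (β - 2) + 1 by ring, Real.rpow_add hs, Real.rpow_one]
      have hB : Mφ * (2 ^ (β - 1) * (s ^ (β - 2) * 4 ^ (2 - β))) * s
          = c1 * (Mφ * s ^ (β - 1)) := by
        rw [hc1def, ← hspow]; ring
      nlinarith [hb, hA, hB, hX, hY, hc2, hc3, hc4,
        mul_nonneg (le_of_lt hc2) hX, mul_nonneg (le_of_lt hc3) hX,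
        mul_nonneg (le_of_lt hc4) hX,
        mul_nonneg (le_of_lt (by linarith : (0:ℝ) < c1 + c2 + c3 + c4)) hY]
    · intro t ht
      rw [Set.uIoc_of_le hs.le] at ht
      rw [Real.norm_eq_abs, abs_mul]
      have h1 : |φ t| ≤ Mφ := hM t ⟨ht.1.le, ht.2.trans hsT⟩
      exact mul_le_mul h1 (hg_glob t ht.1.le) (abs_nonneg _) hMφ0
  · -- large s
    have h2ε : 2 * ε < s := by linarith
    have hs2 : 0 < s - 2 * ε := by linarith
    have contφ := my_phi_cont hα0 hH
    have cg : Continuous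
        (fun r : ℝ => (2 * r ^ β - |r - 2 * ε| ^ β - (r + 2 * ε) ^ β) / (4 * ε ^ 2)) :=
      (my_num_cont hβ0).div_const _
    have hsub1 : Set.uIcc (0:ℝ) s ⊆ Set.Icc 0 T := by
      rw [Set.uIcc_of_le hs.le]; exact Set.Icc_subset_Icc le_rfl hsT
    have hsub2 : Set.uIcc (0:ℝ) (4 * ε) ⊆ Set.Icc 0 T := by
      rw [Set.uIcc_of_le (by linarith : (0:ℝ) ≤ 4 * ε)]
      exact Set.Icc_subset_Icc le_rfl (by linarith)
    have hsub3 : Set.uIcc (4 * ε) s ⊆ Set.Icc 0 T := by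
      rw [Set.uIcc_of_le hcase.le]; exact Set.Icc_subset_Icc (by linarith) hsT
    have intψ : IntervalIntegrable (fun r : ℝ => (φ r - φ 0) *
        ((2 * r ^ β - |r - 2 * ε| ^ β - (r + 2 * ε) ^ β) / (4 * ε ^ 2))) volume 0 s :=
      ((((contφ.mono hsub1)).sub continuousOn_const).mul cg.continuousOn).intervalIntegrable
    have intψ1 : IntervalIntegrable (fun r : ℝ => (φ r - φ 0) *
        ((2 * r ^ β - |r - 2 * ε| ^ β - (r + 2 * ε) ^ β) / (4 * ε ^ 2))) volume 0 (4 * ε) :=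
      ((((contφ.mono hsub2)).sub continuousOn_const).mul cg.continuousOn).intervalIntegrable
    have intψ2 : IntervalIntegrable (fun r : ℝ => (φ r - φ 0) *
        ((2 * r ^ β - |r - 2 * ε| ^ β - (r + 2 * ε) ^ β) / (4 * ε ^ 2))) volume (4 * ε) s :=
      ((((contφ.mono hsub3)).sub continuousOn_const).mul cg.continuousOn).intervalIntegrable
    have intc : IntervalIntegrable (fun r : ℝ => φ 0 *
        ((2 * r ^ β - |r - 2 * ε| ^ β - (r + 2 * ε) ^ β) / (4 * ε ^ 2))) volume 0 s :=
      (continuous_const.mul cg).intervalIntegrable _ _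
    have step1 : (∫ r in (0:ℝ)..s,
          φ r * ((2 * r ^ β - |r - 2 * ε| ^ β - (r + 2 * ε) ^ β) / (4 * ε ^ 2)))
        = (∫ r in (0:ℝ)..s, (φ r - φ 0) *
            ((2 * r ^ β - |r - 2 * ε| ^ β - (r + 2 * ε) ^ β) / (4 * ε ^ 2)))
          + ∫ r in (0:ℝ)..s, φ 0 *
            ((2 * r ^ β - |r - 2 * ε| ^ β - (r + 2 * ε) ^ β) / (4 * ε ^ 2)) := by
      rw [← intervalIntegral.integral_add intψ intc]
      congr 1; funext r; ring
    have step2 : (∫ r in (0:ℝ)..s, φ 0 *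
          ((2 * r ^ β - |r - 2 * ε| ^ β - (r + 2 * ε) ^ β) / (4 * ε ^ 2)))
        = φ 0 * ∫ r in (0:ℝ)..s,
            (2 * r ^ β - |r - 2 * ε| ^ β - (r + 2 * ε) ^ β) / (4 * ε ^ 2) :=
      intervalIntegral.integral_const_mul _ _
    have stepB : (∫ r in (0:ℝ)..s, (φ r - φ 0) *
          ((2 * r ^ β - |r - 2 * ε| ^ β - (r + 2 * ε) ^ β) / (4 * ε ^ 2)))
        = (∫ r in (0:ℝ)..(4 * ε), (φ r - φ 0) *
            ((2 * r ^ β - |r - 2 * ε| ^ β - (r + 2 * ε) ^ β) / (4 * ε ^ 2)))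
          + ∫ r in (4 * ε)..s, (φ r - φ 0) *
            ((2 * r ^ β - |r - 2 * ε| ^ β - (r + 2 * ε) ^ β) / (4 * ε ^ 2)) :=
      (intervalIntegral.integral_add_adjacent_intervals intψ1 intψ2).symm
    -- Term A : the constant part
    have hA : |∫ r in (0:ℝ)..s,
          (2 * r ^ β - |r - 2 * ε| ^ β - (r + 2 * ε) ^ β) / (4 * ε ^ 2)|
        ≤ c2 * s ^ (β - 1) := by
      have hintg : (∫ r in (0:ℝ)..s,
            (2 * r ^ β - |r - 2 * ε| ^ β - (r + 2 * ε) ^ β) / (4 * ε ^ 2))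
          = ((2 * s ^ (β + 1) - (s - 2 * ε) ^ (β + 1) - (s + 2 * ε) ^ (β + 1)) / (β + 1))
            / (4 * ε ^ 2) := by
        rw [intervalIntegral.integral_div, my_int_num hβ0 hε h2ε]
      have hsd := my_second_diff (β + 1) (by linarith) (x := s) (h := 2 * ε)
        (by linarith) hs2
      rw [show β + 1 - 1 = β by ring, show β + 1 - 2 = β - 1 by ring,
        abs_of_pos (by linarith : (0:ℝ) < β + 1), abs_of_pos hβ0] at hsd
      have hhalf : (s - 2 * ε) ^ (β - 1) ≤ s ^ (β - 1) * 2 ^ (1 - β) := by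
        have h1 : (s - 2 * ε) ^ (β - 1) ≤ (s / 2) ^ (β - 1) :=
          Real.rpow_le_rpow_of_nonpos (by linarith) (by linarith) (by linarith)
        have h2 : ((s / 2 : ℝ)) ^ (β - 1) = s ^ (β - 1) * 2 ^ (1 - β) := by
          rw [Real.div_rpow hs.le (by norm_num), show (1:ℝ) - β = -(β - 1) by ring,
            Real.rpow_neg (by norm_num), div_eq_mul_inv]
        linarith [h1.trans_eq h2]
      rw [hintg, abs_div, abs_div, abs_of_pos (by linarith : (0:ℝ) < β + 1),
        abs_of_pos (by positivity : (0:ℝ) < 4 * ε ^ 2)]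
      have step : |2 * s ^ (β + 1) - (s - 2 * ε) ^ (β + 1) - (s + 2 * ε) ^ (β + 1)|
            / (β + 1) / (4 * ε ^ 2)
          ≤ ((β + 1) * β * (s - 2 * ε) ^ (β - 1) * (2 * ε) ^ 2) / (β + 1) / (4 * ε ^ 2) := by
        apply div_le_div_of_nonneg_right _ (by positivity)
        apply div_le_div_of_nonneg_right hsd (by linarith)
      have heq : ((β + 1) * β * (s - 2 * ε) ^ (β - 1) * (2 * ε) ^ 2) / (β + 1) / (4 * ε ^ 2)
          = β * (s - 2 * ε) ^ (β - 1) := by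
        field_simp
        ring
      calc |2 * s ^ (β + 1) - (s - 2 * ε) ^ (β + 1) - (s + 2 * ε) ^ (β + 1)|
            / (β + 1) / (4 * ε ^ 2)
          ≤ β * (s - 2 * ε) ^ (β - 1) := by rw [← heq]; exact step
        _ ≤ β * (s ^ (β - 1) * 2 ^ (1 - β)) := mul_le_mul_of_nonneg_left hhalf hβ0.le
        _ = c2 * s ^ (β - 1) := by rw [hc2def]; ring
    -- Term B1
    have hB1 : |∫ r in (0:ℝ)..(4 * ε), (φ r - φ 0) *
          ((2 * r ^ β - |r - 2 * ε| ^ β - (r + 2 * ε) ^ β) / (4 * ε ^ 2))|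
        ≤ c3 * (Cα * s ^ (α + β - 1)) := by
      have hg1int : IntervalIntegrable
          (fun t : ℝ => Cα * (2 ^ (β - 1) * ε ^ (β - 2)) * t ^ α) volume 0 (4 * ε) :=
        (continuous_const.mul (Real.continuous_rpow_const hα0.le)).intervalIntegrable _ _
      have hae : ∀ᵐ t ∂(volume.restrict (Set.uIoc (0:ℝ) (4 * ε))),
          ‖(φ t - φ 0) * ((2 * t ^ β - |t - 2 * ε| ^ β - (t + 2 * ε) ^ β) / (4 * ε ^ 2))‖
            ≤ Cα * (2 ^ (β - 1) * ε ^ (β - 2)) * t ^ α := by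
        rw [Set.uIoc_of_le (by linarith : (0:ℝ) ≤ 4 * ε)]
        refine (ae_restrict_mem measurableSet_Ioc).mono (fun t ht => ?_)
        have hφt : |φ t - φ 0| ≤ Cα * t ^ α := by
          have := hH t ⟨ht.1.le, by linarith [ht.2]⟩ 0 ⟨le_refl 0, by linarith⟩
          rwa [sub_zero, abs_of_nonneg ht.1.le] at this
        rw [Real.norm_eq_abs, abs_mul]
        calc |φ t - φ 0| * |(2 * t ^ β - |t - 2 * ε| ^ β - (t + 2 * ε) ^ β) / (4 * ε ^ 2)|
            ≤ (Cα * t ^ α) * (2 ^ (β - 1) * ε ^ (β - 2)) :=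
              mul_le_mul hφt (hg_glob t ht.1.le) (abs_nonneg _)
                (mul_nonneg hCα0 (Real.rpow_nonneg ht.1.le _))
          _ = Cα * (2 ^ (β - 1) * ε ^ (β - 2)) * t ^ α := by ring
      have h0 := intervalIntegral.norm_integral_le_abs_of_norm_le hae hg1int
      rw [Real.norm_eq_abs] at h0
      have hval : (∫ t in (0:ℝ)..(4 * ε), Cα * (2 ^ (β - 1) * ε ^ (β - 2)) * t ^ α)
          = Cα * (2 ^ (β - 1) * ε ^ (β - 2)) * ((4 * ε) ^ (α + 1) / (α + 1)) := by
        rw [intervalIntegral.integral_const_mul, integral_rpow (Or.inl (by linarith)),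
          Real.zero_rpow (by linarith : α + 1 ≠ 0)]
        ring
      have hval_nonneg : (0:ℝ) ≤ Cα * (2 ^ (β - 1) * ε ^ (β - 2)) * ((4 * ε) ^ (α + 1) / (α + 1)) := by
        apply mul_nonneg (mul_nonneg hCα0 (by positivity))
        apply div_nonneg (Real.rpow_nonneg (by linarith) _) (by linarith)
      rw [hval, abs_of_nonneg hval_nonneg] at h0
      refine h0.trans ?_
      have hmul4 : ((4:ℝ) * ε) ^ (α + 1) = 4 ^ (α + 1) * ε ^ (α + 1) :=
        Real.mul_rpow (by norm_num) hε.le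
      have hεcomb : ε ^ (β - 2) * ε ^ (α + 1) = ε ^ (α + β - 1) := by
        rw [← Real.rpow_add hε, show β - 2 + (α + 1) = α + β - 1 by ring]
      have hεs' : ε ^ (α + β - 1) ≤ s ^ (α + β - 1) :=
        Real.rpow_le_rpow hε.le (by linarith) hαβ.le
      calc Cα * (2 ^ (β - 1) * ε ^ (β - 2)) * ((4 * ε) ^ (α + 1) / (α + 1))
          = (Cα * (2 ^ (β - 1) * 4 ^ (α + 1) / (α + 1))) * (ε ^ (β - 2) * ε ^ (α + 1)) := by
            rw [hmul4]; ring
        _ = (Cα * (2 ^ (β - 1) * 4 ^ (α + 1) / (α + 1))) * ε ^ (α + β - 1) := by rw [hεcomb]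
        _ ≤ (Cα * (2 ^ (β - 1) * 4 ^ (α + 1) / (α + 1))) * s ^ (α + β - 1) :=
            mul_le_mul_of_nonneg_left hεs' (mul_nonneg hCα0 (by positivity))
        _ = c3 * (Cα * s ^ (α + β - 1)) := by rw [hc3def]; ring
    -- Term B2
    have hB2 : |∫ r in (4 * ε)..s, (φ r - φ 0) *
          ((2 * r ^ β - |r - 2 * ε| ^ β - (r + 2 * ε) ^ β) / (4 * ε ^ 2))|
        ≤ c4 * (Cα * s ^ (α + β - 1)) := by
      have hg2int : IntervalIntegrable
          (fun t : ℝ => Cα * (β * (1 - β) * 2 ^ (2 - β)) * t ^ (α + β - 2)) volume (4 * ε) s := by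
        apply ContinuousOn.intervalIntegrable
        apply ContinuousOn.mul continuousOn_const
        intro t ht
        rw [Set.uIcc_of_le hcase.le] at ht
        exact (Real.continuousAt_rpow_const t _
          (Or.inl (by nlinarith [ht.1] : t ≠ 0))).continuousWithinAt
      have hae : ∀ᵐ t ∂(volume.restrict (Set.uIoc (4 * ε) s)),
          ‖(φ t - φ 0) * ((2 * t ^ β - |t - 2 * ε| ^ β - (t + 2 * ε) ^ β) / (4 * ε ^ 2))‖
            ≤ Cα * (β * (1 - β) * 2 ^ (2 - β)) * t ^ (α + β - 2) := by
        rw [Set.uIoc_of_le hcase.le]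
        refine (ae_restrict_mem measurableSet_Ioc).mono (fun t ht => ?_)
        have ht0 : 0 < t := by linarith [ht.1]
        have htm : 0 < t - 2 * ε := by linarith [ht.1]
        have hφt : |φ t - φ 0| ≤ Cα * t ^ α := by
          have := hH t ⟨ht0.le, by linarith [ht.2]⟩ 0 ⟨le_refl 0, by linarith⟩
          rwa [sub_zero, abs_of_nonneg ht0.le] at this
        have hsd2 := my_second_diff β (by linarith) (x := t) (h := 2 * ε) (by linarith) htm
        rw [abs_of_pos hβ0, abs_of_nonpos (by linarith : β - 1 ≤ 0),
          show -(β - 1) = 1 - β by ring] at hsd2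
        have hkernel : |(2 * t ^ β - |t - 2 * ε| ^ β - (t + 2 * ε) ^ β) / (4 * ε ^ 2)|
            ≤ β * (1 - β) * 2 ^ (2 - β) * t ^ (β - 2) := by
          rw [abs_div, abs_of_pos (by positivity : (0:ℝ) < 4 * ε ^ 2),
            abs_of_nonneg (by linarith : (0:ℝ) ≤ t - 2 * ε)]
          have e1 : β * (1 - β) * (t - 2 * ε) ^ (β - 2) * (2 * ε) ^ 2 / (4 * ε ^ 2)
              = β * (1 - β) * (t - 2 * ε) ^ (β - 2) := by
            rw [show (2 * ε) ^ 2 = 4 * ε ^ 2 by ring, mul_div_assoc,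
              div_self (ne_of_gt (by positivity : (0:ℝ) < 4 * ε ^ 2)), mul_one]
          have step : |2 * t ^ β - (t - 2 * ε) ^ β - (t + 2 * ε) ^ β| / (4 * ε ^ 2)
              ≤ β * (1 - β) * (t - 2 * ε) ^ (β - 2) := by
            rw [← e1]
            exact div_le_div_of_nonneg_right hsd2 (by positivity)
          refine step.trans ?_
          have hhalf2 : (t - 2 * ε) ^ (β - 2) ≤ t ^ (β - 2) * 2 ^ (2 - β) := by
            have h1 : (t - 2 * ε) ^ (β - 2) ≤ (t / 2) ^ (β - 2) :=
              Real.rpow_le_rpow_of_nonpos (by linarith) (by linarith [ht.1]) (by linarith)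
            have h2 : ((t / 2 : ℝ)) ^ (β - 2) = t ^ (β - 2) * 2 ^ (2 - β) := by
              rw [Real.div_rpow ht0.le (by norm_num), show (2:ℝ) - β = -(β - 2) by ring,
                Real.rpow_neg (by norm_num), div_eq_mul_inv]
            linarith [h1.trans_eq h2]
          calc β * (1 - β) * (t - 2 * ε) ^ (β - 2)
              ≤ β * (1 - β) * (t ^ (β - 2) * 2 ^ (2 - β)) :=
                mul_le_mul_of_nonneg_left hhalf2 (by nlinarith)
            _ = β * (1 - β) * 2 ^ (2 - β) * t ^ (β - 2) := by ring
        rw [Real.norm_eq_abs, abs_mul]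
        calc |φ t - φ 0| * |(2 * t ^ β - |t - 2 * ε| ^ β - (t + 2 * ε) ^ β) / (4 * ε ^ 2)|
            ≤ (Cα * t ^ α) * (β * (1 - β) * 2 ^ (2 - β) * t ^ (β - 2)) :=
              mul_le_mul hφt hkernel (abs_nonneg _)
                (mul_nonneg hCα0 (Real.rpow_nonneg ht0.le _))
          _ = Cα * (β * (1 - β) * 2 ^ (2 - β)) * (t ^ α * t ^ (β - 2)) := by ring
          _ = Cα * (β * (1 - β) * 2 ^ (2 - β)) * t ^ (α + β - 2) := by
              rw [← Real.rpow_add ht0, show α + (β - 2) = α + β - 2 by ring]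
      have h0 := intervalIntegral.norm_integral_le_abs_of_norm_le hae hg2int
      rw [Real.norm_eq_abs] at h0
      have hval : (∫ t in (4 * ε)..s, Cα * (β * (1 - β) * 2 ^ (2 - β)) * t ^ (α + β - 2))
          = Cα * (β * (1 - β) * 2 ^ (2 - β))
            * ((s ^ (α + β - 1) - (4 * ε) ^ (α + β - 1)) / (α + β - 1)) := by
        rw [intervalIntegral.integral_const_mul, integral_rpow (Or.inl (by linarith)),
          show α + β - 2 + 1 = α + β - 1 by ring]
      have hge : (4 * ε) ^ (α + β - 1) ≤ s ^ (α + β - 1) :=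
        Real.rpow_le_rpow (by linarith) hcase.le hαβ.le
      have hK2 : (0:ℝ) ≤ Cα * (β * (1 - β) * 2 ^ (2 - β)) :=
        mul_nonneg hCα0 (mul_nonneg (mul_nonneg hβ0.le (by linarith))
          (Real.rpow_nonneg (by norm_num) _))
      have hval_nonneg : (0:ℝ) ≤ Cα * (β * (1 - β) * 2 ^ (2 - β))
          * ((s ^ (α + β - 1) - (4 * ε) ^ (α + β - 1)) / (α + β - 1)) := by
        apply mul_nonneg hK2
        apply div_nonneg (by linarith) (by linarith)
      rw [hval, abs_of_nonneg hval_nonneg] at h0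
      refine h0.trans ?_
      calc Cα * (β * (1 - β) * 2 ^ (2 - β))
            * ((s ^ (α + β - 1) - (4 * ε) ^ (α + β - 1)) / (α + β - 1))
          ≤ Cα * (β * (1 - β) * 2 ^ (2 - β)) * (s ^ (α + β - 1) / (α + β - 1)) := by
            apply mul_le_mul_of_nonneg_left _ hK2
            apply div_le_div_of_nonneg_right _ hαβ.le
            have := Real.rpow_nonneg (show (0:ℝ) ≤ 4 * ε by linarith) (α + β - 1)
            linarith
        _ = c4 * (Cα * s ^ (α + β - 1)) := by rw [hc4def]; field_simp
    -- combine
    have hφ0 : |φ 0| ≤ Mφ := hM 0 ⟨le_refl 0, by linarith⟩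
    rw [step1, stepB]
    have habs : |((∫ r in (0:ℝ)..(4 * ε), (φ r - φ 0) *
          ((2 * r ^ β - |r - 2 * ε| ^ β - (r + 2 * ε) ^ β) / (4 * ε ^ 2)))
        + ∫ r in (4 * ε)..s, (φ r - φ 0) *
          ((2 * r ^ β - |r - 2 * ε| ^ β - (r + 2 * ε) ^ β) / (4 * ε ^ 2)))
        + ∫ r in (0:ℝ)..s, φ 0 *
          ((2 * r ^ β - |r - 2 * ε| ^ β - (r + 2 * ε) ^ β) / (4 * ε ^ 2))|
        ≤ c3 * (Cα * s ^ (α + β - 1)) + c4 * (Cα * s ^ (α + β - 1))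
          + Mφ * (c2 * s ^ (β - 1)) := by
      have t1 := abs_add_le ((∫ r in (0:ℝ)..(4 * ε), (φ r - φ 0) *
          ((2 * r ^ β - |r - 2 * ε| ^ β - (r + 2 * ε) ^ β) / (4 * ε ^ 2)))
        + ∫ r in (4 * ε)..s, (φ r - φ 0) *
          ((2 * r ^ β - |r - 2 * ε| ^ β - (r + 2 * ε) ^ β) / (4 * ε ^ 2)))
        (∫ r in (0:ℝ)..s, φ 0 *
          ((2 * r ^ β - |r - 2 * ε| ^ β - (r + 2 * ε) ^ β) / (4 * ε ^ 2)))
      have t2 := abs_add_le (∫ r in (0:ℝ)..(4 * ε), (φ r - φ 0) *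
          ((2 * r ^ β - |r - 2 * ε| ^ β - (r + 2 * ε) ^ β) / (4 * ε ^ 2)))
        (∫ r in (4 * ε)..s, (φ r - φ 0) *
          ((2 * r ^ β - |r - 2 * ε| ^ β - (r + 2 * ε) ^ β) / (4 * ε ^ 2)))
      have t3 : |∫ r in (0:ℝ)..s, φ 0 *
          ((2 * r ^ β - |r - 2 * ε| ^ β - (r + 2 * ε) ^ β) / (4 * ε ^ 2))|
          ≤ Mφ * (c2 * s ^ (β - 1)) := by
        rw [step2, abs_mul]
        exact mul_le_mul hφ0 hA (abs_nonneg _) hMφ0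
      linarith [hB1, hB2]
    refine habs.trans ?_
    nlinarith [hX, hY, hc1.le, hc2.le, hc3.le, hc4.le,
      mul_nonneg hc1.le hX, mul_nonneg hc2.le hY, mul_nonneg hc3.le hX,
      mul_nonneg hc4.le hX, mul_nonneg hc1.le hY, mul_nonneg hc2.le hX,
      mul_nonneg hc3.le hY, mul_nonneg hc4.le hY]
end

section
/- Let $H \in (0,1/2)$ and define $h(r) = |r|^{2H}$, so $h'(r) = 2H\,\mathrm{sign}(r)|r|^{2H-1}$ for $r \neq 0$. Then for all $0 < x < y$ and $\Delta > 0$ and all $\beta_1, \beta_2 \in (0,1)$ with $2H + \beta_1 + \beta_2 > 2$, we have $x^{2H-1} - y^{2H-1} - (x+\Delta)^{2H-1} + (y+\Delta)^{2H-1} \le C\, x^{2H+\beta_1+\beta_2-3}\,(y-x)^{1-\beta_1}\,\Delta^{1-\beta_2}$ for a constant $C$ depending only on $H$. -/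
open Real

/-- Bernoulli's inequality for nonpositive exponents. -/
lemma negBern {q t : ℝ} (hq : q ≤ 0) (ht : 0 < t) : 1 + q * (t - 1) ≤ t ^ q := by
  have h1 : Real.log t ≤ t - 1 := Real.log_le_sub_one_of_pos ht
  have h2 : q * (t - 1) ≤ q * Real.log t := by nlinarith
  have h3 : 1 + q * Real.log t ≤ Real.exp (q * Real.log t) := by
    linarith [Real.add_one_le_exp (q * Real.log t)]
  have h4 : t ^ q = Real.exp (Real.log t * q) := Real.rpow_def_of_pos ht q
  rw [h4, mul_comm (Real.log t) q]
  linarith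

/-- first-order upper bound at the left endpoint. -/
lemma keyA {q a b : ℝ} (hq : q ≤ 0) (ha : 0 < a) (hab : a ≤ b) :
    a ^ q - b ^ q ≤ -q * (a ^ (q - 1) * (b - a)) := by
  have hb : 0 < b := ha.trans_le hab
  set s : ℝ := b / a with hs
  have hs0 : 0 < s := div_pos hb ha
  have hbs : b = a * s := by rw [hs]; field_simp
  have h1 : 1 + q * (s - 1) ≤ s ^ q := negBern hq hs0
  have haq : 0 < a ^ q := Real.rpow_pos_of_pos ha q
  have hbq : b ^ q = a ^ q * s ^ q := by
    rw [hbs, Real.mul_rpow ha.le hs0.le]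
  have haq1 : a ^ (q - 1) * a = a ^ q := by
    rw [← Real.rpow_add_one ha.ne' (q - 1)]; congr 1; ring
  have hba : b - a = a * (s - 1) := by rw [hbs]; ring
  have h2 : a ^ q * (1 + q * (s - 1)) ≤ a ^ q * s ^ q :=
    mul_le_mul_of_nonneg_left h1 haq.le
  rw [hbq, hba]
  calc a ^ q - a ^ q * s ^ q ≤ a ^ q - a ^ q * (1 + q * (s - 1)) := by linarith
    _ = -q * (a ^ q * (s - 1)) := by ring
    _ = -q * (a ^ (q - 1) * (a * (s - 1))) := by rw [← haq1]; ring

/-- first-order lower bound at the right endpoint. -/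
lemma keyB {q a b : ℝ} (hq : q ≤ 0) (ha : 0 < a) (hab : a ≤ b) :
    -q * (b ^ (q - 1) * (b - a)) ≤ a ^ q - b ^ q := by
  have hb : 0 < b := ha.trans_le hab
  set s : ℝ := a / b with hs
  have hs0 : 0 < s := div_pos ha hb
  have has : a = b * s := by rw [hs]; field_simp
  have h1 : 1 + q * (s - 1) ≤ s ^ q := negBern hq hs0
  have hbq : 0 < b ^ q := Real.rpow_pos_of_pos hb q
  have haq : a ^ q = b ^ q * s ^ q := by
    rw [has, Real.mul_rpow hb.le hs0.le]
  have hbq1 : b ^ (q - 1) * b = b ^ q := by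
    rw [← Real.rpow_add_one hb.ne' (q - 1)]; congr 1; ring
  have hba : b - a = b * (1 - s) := by rw [has]; ring
  have h2 : b ^ q * (1 + q * (s - 1)) ≤ b ^ q * s ^ q :=
    mul_le_mul_of_nonneg_left h1 hbq.le
  rw [haq, hba]
  calc -q * (b ^ (q - 1) * (b * (1 - s))) = -q * (b ^ q * (1 - s)) := by
        rw [← hbq1]; ring
    _ = b ^ q * (1 + q * (s - 1)) - b ^ q := by ring
    _ ≤ b ^ q * s ^ q - b ^ q := by linarith

lemma arith1 (q P d u : ℝ) (hq0 : q ≤ 0) (hq1 : -1 ≤ q) (hP : 0 ≤ P)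
    (hd : 0 ≤ d) (hu : 0 ≤ u) (hdu : d ≤ u) :
    -q * d * (-(q - 1) * (P * (u + d))) ≤ 4 * P * u * d := by
  have ha : 0 ≤ -q := by linarith
  have hab : -q * (1 - q) ≤ 2 := by nlinarith
  have h2 : d * (u + d) ≤ 2 * (u * d) := by
    nlinarith [mul_nonneg hd (sub_nonneg.2 hdu)]
  have hX : 0 ≤ P * (d * (u + d)) := mul_nonneg hP (mul_nonneg hd (by linarith))
  have hY : P * (d * (u + d)) ≤ P * (2 * (u * d)) :=
    mul_le_mul_of_nonneg_left (by linarith) hP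
  have h3 : -q * (1 - q) * (P * (d * (u + d))) ≤ 2 * (P * (2 * (u * d))) := by
    calc -q * (1 - q) * (P * (d * (u + d))) ≤ 2 * (P * (d * (u + d))) :=
          mul_le_mul_of_nonneg_right hab hX
      _ ≤ 2 * (P * (2 * (u * d))) := by linarith
  calc -q * d * (-(q - 1) * (P * (u + d))) = -q * (1 - q) * (P * (d * (u + d))) := by ring
    _ ≤ 2 * (P * (2 * (u * d))) := h3
    _ = 4 * P * u * d := by ring

lemma min_le_rpow {w β : ℝ} (hw : 0 < w) (hβ0 : 0 ≤ β) (hβ1 : β ≤ 1) :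
    min 1 w ≤ w ^ (1 - β) := by
  rcases le_total w 1 with h | h
  · have : w ^ (1 : ℝ) ≤ w ^ (1 - β) :=
      Real.rpow_le_rpow_of_exponent_ge hw h (by linarith)
    rw [Real.rpow_one] at this
    exact le_trans (min_le_right _ _) this
  · rw [min_eq_left h]
    have h1 : (1 : ℝ) ^ (1 - β) ≤ w ^ (1 - β) :=
      Real.rpow_le_rpow (by norm_num) h (by linarith)
    rwa [Real.one_rpow] at h1

set_option maxHeartbeats 1000000 in
theorem stmt4 (H : ℝ) (hH0 : 0 < H) (hH : H < 1/2) :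
    ∃ C > 0, ∀ (β₁ β₂ : ℝ), 0 < β₁ → β₁ < 1 → 0 < β₂ → β₂ < 1 →
      2 < 2 * H + β₁ + β₂ →
      ∀ (x y Δ : ℝ), 0 < x → x < y → 0 < Δ →
      x ^ (2 * H - 1) - y ^ (2 * H - 1) - (x + Δ) ^ (2 * H - 1) + (y + Δ) ^ (2 * H - 1)
        ≤ C * x ^ (2 * H + β₁ + β₂ - 3) * (y - x) ^ (1 - β₁) * Δ ^ (1 - β₂) := by
  refine ⟨4, by norm_num, ?_⟩
  intro β₁ β₂ hβ₁ hβ₁' hβ₂ hβ₂' hsum x y Δ hx hxy hΔ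
  set q : ℝ := 2 * H - 1 with hqdef
  have hq0 : q ≤ 0 := by simp [hqdef]; linarith
  have hq1 : -1 < q := by simp [hqdef]; linarith
  have hy : 0 < y := hx.trans hxy
  set u : ℝ := y - x with hudef
  have hu : 0 < u := by rw [hudef]; linarith
  have hxΔ : 0 < x + Δ := by linarith
  have hyΔ : 0 < y + Δ := by linarith
  have hxq : 0 < x ^ q := Real.rpow_pos_of_pos hx q
  have hxq1 : 0 < x ^ (q - 1) := Real.rpow_pos_of_pos hx (q - 1)
  have hxq2 : 0 < x ^ (q - 2) := Real.rpow_pos_of_pos hx (q - 2)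
  have hxq1x : x ^ (q - 1) * x = x ^ q := by
    rw [← Real.rpow_add_one hx.ne' (q - 1)]; congr 1; ring
  have hxq2x : x ^ (q - 2) * x = x ^ (q - 1) := by
    rw [← Real.rpow_add_one hx.ne' (q - 2)]; congr 1; ring
  -- Step 1 : main bound with minima
  have step1 : x ^ q - y ^ q - (x + Δ) ^ q + (y + Δ) ^ q
      ≤ 4 * x ^ q * min 1 (u / x) * min 1 (Δ / x) := by
    rcases le_or_gt u x with hux | hux
    · have hMu : min 1 (u / x) = u / x := min_eq_right (by
        rw [div_le_one hx]; exact hux)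
      rcases le_or_gt Δ x with hΔx | hΔx
      · -- both small : second-order bound
        have hMv : min 1 (Δ / x) = Δ / x := min_eq_right (by
          rw [div_le_one hx]; exact hΔx)
        rw [hMu, hMv]
        have hgoal : 4 * x ^ q * (u / x) * (Δ / x) = 4 * x ^ (q - 2) * u * Δ := by
          field_simp
          rw [← hxq1x, ← hxq2x]; ring
        rw [hgoal]
        have hA2 : x ^ (q - 1) - (y + Δ) ^ (q - 1)
            ≤ -(q - 1) * (x ^ (q - 1 - 1) * (y + Δ - x)) :=
          keyA (by linarith) hx (by linarith)
        have hq11 : q - 1 - 1 = q - 2 := by ring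
        rw [hq11] at hA2
        rcases le_total Δ u with hΔu | hΔu
        · -- use Δ as the small increment
          have hA1 : x ^ q - (x + Δ) ^ q ≤ -q * (x ^ (q - 1) * (x + Δ - x)) :=
            keyA hq0 hx (by linarith)
          have hB1 : -q * ((y + Δ) ^ (q - 1) * (y + Δ - y)) ≤ y ^ q - (y + Δ) ^ q :=
            keyB hq0 hy (by linarith)
          have hkey : x ^ q - y ^ q - (x + Δ) ^ q + (y + Δ) ^ q
              ≤ -q * Δ * (x ^ (q - 1) - (y + Δ) ^ (q - 1)) := by
            have e1 : x + Δ - x = Δ := by ring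
            have e2 : y + Δ - y = Δ := by ring
            rw [e1] at hA1; rw [e2] at hB1
            have e4 : -q * Δ * (x ^ (q - 1) - (y + Δ) ^ (q - 1))
                = -q * (x ^ (q - 1) * Δ) - -q * ((y + Δ) ^ (q - 1) * Δ) := by ring
            linarith [hA1, hB1, e4.ge, e4.le]
          have hqΔ : 0 ≤ -q * Δ := by nlinarith
          have h2 : -q * Δ * (x ^ (q - 1) - (y + Δ) ^ (q - 1))
              ≤ -q * Δ * (-(q - 1) * (x ^ (q - 2) * (y + Δ - x))) :=
            mul_le_mul_of_nonneg_left hA2 hqΔ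
          have e3 : y + Δ - x = u + Δ := by rw [hudef]; ring
          rw [e3] at h2
          have hfin : -q * Δ * (-(q - 1) * (x ^ (q - 2) * (u + Δ)))
              ≤ 4 * x ^ (q - 2) * u * Δ :=
            arith1 q (x ^ (q - 2)) Δ u hq0 hq1.le hxq2.le hΔ.le hu.le hΔu
          linarith
        · -- use u as the small increment
          have hA1 : x ^ q - y ^ q ≤ -q * (x ^ (q - 1) * (y - x)) :=
            keyA hq0 hx hxy.le
          have hB1 : -q * ((y + Δ) ^ (q - 1) * (y + Δ - (x + Δ))) ≤
              (x + Δ) ^ q - (y + Δ) ^ q :=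
            keyB hq0 hxΔ (by linarith)
          have hkey : x ^ q - y ^ q - (x + Δ) ^ q + (y + Δ) ^ q
              ≤ -q * u * (x ^ (q - 1) - (y + Δ) ^ (q - 1)) := by
            have e1 : y - x = u := hudef.symm
            have e2 : y + Δ - (x + Δ) = u := by rw [hudef]; ring
            rw [e1] at hA1; rw [e2] at hB1
            have e4 : -q * u * (x ^ (q - 1) - (y + Δ) ^ (q - 1))
                = -q * (x ^ (q - 1) * u) - -q * ((y + Δ) ^ (q - 1) * u) := by ring
            linarith [hA1, hB1, e4.ge, e4.le]
          have hqu : 0 ≤ -q * u := by nlinarith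
          have h2 : -q * u * (x ^ (q - 1) - (y + Δ) ^ (q - 1))
              ≤ -q * u * (-(q - 1) * (x ^ (q - 2) * (y + Δ - x))) :=
            mul_le_mul_of_nonneg_left hA2 hqu
          have e3 : y + Δ - x = u + Δ := by rw [hudef]; ring
          rw [e3] at h2
          have hfin : -q * u * (-(q - 1) * (x ^ (q - 2) * (Δ + u)))
              ≤ 4 * x ^ (q - 2) * Δ * u :=
            arith1 q (x ^ (q - 2)) u Δ hq0 hq1.le hxq2.le hu.le hΔ.le hΔu
          have e5 : -q * u * (-(q - 1) * (x ^ (q - 2) * (u + Δ)))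
              = -q * u * (-(q - 1) * (x ^ (q - 2) * (Δ + u))) := by ring
          have e6 : 4 * x ^ (q - 2) * Δ * u = 4 * x ^ (q - 2) * u * Δ := by ring
          linarith
      · -- u small, Δ large
        have hMv : min 1 (Δ / x) = 1 := min_eq_left (by
          rw [le_div_iff₀ hx]; linarith)
        rw [hMu, hMv, mul_one]
        have hmono : (y + Δ) ^ q ≤ (x + Δ) ^ q :=
          Real.rpow_le_rpow_of_nonpos hxΔ (by linarith) hq0
        have hA1 : x ^ q - y ^ q ≤ -q * (x ^ (q - 1) * (y - x)) :=
          keyA hq0 hx hxy.le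
        have h2 : -q * (x ^ (q - 1) * u) ≤ x ^ (q - 1) * u := by
          nlinarith [mul_pos hxq1 hu]
        have h3 : x ^ (q - 1) * u = x ^ q * (u / x) := by
          field_simp
          rw [← hxq1x]
        have e1 : y - x = u := hudef.symm
        rw [e1] at hA1
        have h4 : x ^ q * (u / x) ≤ 4 * x ^ q * (u / x) := by
          nlinarith [mul_pos hxq (div_pos hu hx)]
        calc x ^ q - y ^ q - (x + Δ) ^ q + (y + Δ) ^ q
            ≤ x ^ q - y ^ q := by linarith [hmono]
          _ ≤ -q * (x ^ (q - 1) * u) := hA1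
          _ ≤ x ^ (q - 1) * u := h2
          _ = x ^ q * (u / x) := h3
          _ ≤ 4 * x ^ q * (u / x) := h4
    · have hMu : min 1 (u / x) = 1 := min_eq_left (by
        rw [le_div_iff₀ hx]; linarith)
      rw [hMu, mul_one]
      have hmono : (y + Δ) ^ q ≤ y ^ q :=
        Real.rpow_le_rpow_of_nonpos hy (by linarith) hq0
      rcases le_or_gt Δ x with hΔx | hΔx
      · -- Δ small, u large
        have hMv : min 1 (Δ / x) = Δ / x := min_eq_right (by
          rw [div_le_one hx]; exact hΔx)
        rw [hMv]
        have hA1 : x ^ q - (x + Δ) ^ q ≤ -q * (x ^ (q - 1) * (x + Δ - x)) :=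
          keyA hq0 hx (by linarith)
        have e1 : x + Δ - x = Δ := by ring
        rw [e1] at hA1
        have h2 : -q * (x ^ (q - 1) * Δ) ≤ x ^ (q - 1) * Δ := by
          nlinarith [mul_pos hxq1 hΔ]
        have h3 : x ^ (q - 1) * Δ = x ^ q * (Δ / x) := by
          field_simp
          rw [← hxq1x]
        have h4 : x ^ q * (Δ / x) ≤ 4 * x ^ q * (Δ / x) := by
          nlinarith [mul_pos hxq (div_pos hΔ hx)]
        calc x ^ q - y ^ q - (x + Δ) ^ q + (y + Δ) ^ q
            ≤ x ^ q - (x + Δ) ^ q := by linarith [hmono]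
          _ ≤ -q * (x ^ (q - 1) * Δ) := hA1
          _ ≤ x ^ (q - 1) * Δ := h2
          _ = x ^ q * (Δ / x) := h3
          _ ≤ 4 * x ^ q * (Δ / x) := h4
      · -- both large
        have hMv : min 1 (Δ / x) = 1 := min_eq_left (by
          rw [le_div_iff₀ hx]; linarith)
        rw [hMv, mul_one]
        have hpos : 0 < (x + Δ) ^ q := Real.rpow_pos_of_pos hxΔ q
        nlinarith
  -- Step 2 : from minima to rpow bounds
  have hMu1 : min 1 (u / x) ≤ (u / x) ^ (1 - β₁) :=
    min_le_rpow (div_pos hu hx) hβ₁.le hβ₁'.le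
  have hMv1 : min 1 (Δ / x) ≤ (Δ / x) ^ (1 - β₂) :=
    min_le_rpow (div_pos hΔ hx) hβ₂.le hβ₂'.le
  have hMu0 : 0 ≤ min 1 (u / x) := le_min (by norm_num) (div_pos hu hx).le
  have hMv0 : 0 ≤ min 1 (Δ / x) := le_min (by norm_num) (div_pos hΔ hx).le
  have step2 : 4 * x ^ q * min 1 (u / x) * min 1 (Δ / x)
      ≤ 4 * x ^ q * (u / x) ^ (1 - β₁) * (Δ / x) ^ (1 - β₂) := by
    have hc : 0 ≤ 4 * x ^ q := by positivity
    have h1 : 4 * x ^ q * min 1 (u / x) ≤ 4 * x ^ q * (u / x) ^ (1 - β₁) :=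
      mul_le_mul_of_nonneg_left hMu1 hc
    have h2 : 4 * x ^ q * min 1 (u / x) * min 1 (Δ / x)
        ≤ 4 * x ^ q * (u / x) ^ (1 - β₁) * min 1 (Δ / x) :=
      mul_le_mul_of_nonneg_right h1 hMv0
    have h3 : 4 * x ^ q * (u / x) ^ (1 - β₁) * min 1 (Δ / x)
        ≤ 4 * x ^ q * (u / x) ^ (1 - β₁) * (Δ / x) ^ (1 - β₂) :=
      mul_le_mul_of_nonneg_left hMv1 (by positivity)
    linarith
  -- Step 3 : identify with the right-hand side
  have step3 : 4 * x ^ q * (u / x) ^ (1 - β₁) * (Δ / x) ^ (1 - β₂)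
      = 4 * x ^ (2 * H + β₁ + β₂ - 3) * u ^ (1 - β₁) * Δ ^ (1 - β₂) := by
    rw [Real.div_rpow hu.le hx.le, Real.div_rpow hΔ.le hx.le]
    rw [div_eq_mul_inv, div_eq_mul_inv, ← Real.rpow_neg hx.le, ← Real.rpow_neg hx.le]
    have : x ^ q * (u ^ (1 - β₁) * x ^ (-(1 - β₁))) * (Δ ^ (1 - β₂) * x ^ (-(1 - β₂)))
        = (x ^ q * x ^ (-(1 - β₁)) * x ^ (-(1 - β₂))) * u ^ (1 - β₁) * Δ ^ (1 - β₂) := by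
      ring
    have hx3 : x ^ q * x ^ (-(1 - β₁)) * x ^ (-(1 - β₂)) = x ^ (2 * H + β₁ + β₂ - 3) := by
      rw [← Real.rpow_add hx, ← Real.rpow_add hx]
      congr 1
      simp [hqdef]; ring
    calc 4 * x ^ q * (u ^ (1 - β₁) * x ^ (-(1 - β₁))) * (Δ ^ (1 - β₂) * x ^ (-(1 - β₂)))
        = 4 * (x ^ q * x ^ (-(1 - β₁)) * x ^ (-(1 - β₂))) * u ^ (1 - β₁) * Δ ^ (1 - β₂) := by
          ring
      _ = 4 * x ^ (2 * H + β₁ + β₂ - 3) * u ^ (1 - β₁) * Δ ^ (1 - β₂) := by rw [hx3]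
  calc x ^ (2 * H - 1) - y ^ (2 * H - 1) - (x + Δ) ^ (2 * H - 1) + (y + Δ) ^ (2 * H - 1)
      = x ^ q - y ^ q - (x + Δ) ^ q + (y + Δ) ^ q := by rw [hqdef]
    _ ≤ 4 * x ^ q * min 1 (u / x) * min 1 (Δ / x) := step1
    _ ≤ 4 * x ^ q * (u / x) ^ (1 - β₁) * (Δ / x) ^ (1 - β₂) := step2
    _ = 4 * x ^ (2 * H + β₁ + β₂ - 3) * u ^ (1 - β₁) * Δ ^ (1 - β₂) := step3
    _ = 4 * x ^ (2 * H + β₁ + β₂ - 3) * (y - x) ^ (1 - β₁) * Δ ^ (1 - β₂) := by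
        rw [hudef]
end

section
/- Let $H \in (0,1/2)$, $\Delta \le 0$, and $1-2H < \gamma < 1$. Then for all $0 < r < u$, with $h'(r) = 2H\,\mathrm{sign}(r)|r|^{2H-1}$, and any $\beta_1,\beta_2>0$ with $\beta_1+\beta_2 < 2H$: $|h'(r-\Delta) - h'(u-\Delta) - h'(r) + h'(u)| \le C\, r^{2H-1-\beta_1-\beta_2}\,(u-r)^{\beta_1}\,|\Delta|^{\beta_2}$, where $C$ depends only on $H$, $\beta_1$, $\beta_2$. -/
open Real


-- MVT bound: a^p - b^p ≤ (-p) * a^(p-1) * (b-a) for 0 < a ≤ b, p < 0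
lemma mvt_rpow {p a b : ℝ} (hp : p < 0) (ha : 0 < a) (hab : a ≤ b) :
    a ^ p - b ^ p ≤ (-p) * a ^ (p - 1) * (b - a) := by
  rcases eq_or_lt_of_le hab with rfl | hab'
  · simp
  have hcont : ContinuousOn (fun x : ℝ => x ^ p) (Set.Icc a b) := by
    intro x hx
    exact (Real.continuousAt_rpow_const x p (Or.inl (ne_of_gt (lt_of_lt_of_le ha hx.1)))).continuousWithinAt
  have hderiv : ∀ x ∈ Set.Ioo a b, HasDerivAt (fun x : ℝ => x ^ p) (p * x ^ (p - 1)) x := by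
    intro x hx
    exact Real.hasDerivAt_rpow_const (Or.inl (ne_of_gt (lt_trans ha hx.1)))
  obtain ⟨c, hc, hceq⟩ := exists_hasDerivAt_eq_slope (fun x : ℝ => x ^ p)
    (fun x => p * x ^ (p - 1)) hab' hcont hderiv
  have hc1 : c ^ (p - 1) ≤ a ^ (p - 1) :=
    Real.rpow_le_rpow_of_nonpos ha hc.1.le (by linarith)
  have hba : 0 < b - a := by linarith
  have : b ^ p - a ^ p = p * c ^ (p - 1) * (b - a) := by
    field_simp at hceq
    linarith [hceq]
  have hcp : 0 ≤ c ^ (p - 1) := Real.rpow_nonneg (by linarith [hc.1, ha]) _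
  have key : (-p) * c ^ (p - 1) * (b - a) ≤ (-p) * a ^ (p - 1) * (b - a) :=
    mul_le_mul_of_nonneg_right (mul_le_mul_of_nonneg_left hc1 (by linarith)) hba.le
  nlinarith [key, this]

-- increasing differences: for 0 < a ≤ b, 0 ≤ t:  b^p - (b+t)^p ≤ a^p - (a+t)^p
lemma diff_anti {p t a b : ℝ} (hp : p < 0) (ht : 0 ≤ t) (ha : 0 < a) (hab : a ≤ b) :
    b ^ p - (b + t) ^ p ≤ a ^ p - (a + t) ^ p := by
  have hD : ∀ x ∈ Set.Ioi (0:ℝ), HasDerivAt (fun x : ℝ => x ^ p - (x + t) ^ p)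
      (p * x ^ (p - 1) - p * (x + t) ^ (p - 1) * 1) x := by
    intro x hx
    have hx0 : (0:ℝ) < x := hx
    have h1 : HasDerivAt (fun x : ℝ => x ^ p) (p * x ^ (p - 1)) x :=
      Real.hasDerivAt_rpow_const (Or.inl (ne_of_gt hx0))
    have h2 : HasDerivAt (fun x : ℝ => (x + t) ^ p) (p * (x + t) ^ (p - 1) * 1) x := by
      have := (Real.hasDerivAt_rpow_const (p := p) (x := x + t)
        (Or.inl (by positivity))).comp x ((hasDerivAt_id x).add_const t)
      simpa [Function.comp_def] using this
    exact h1.sub h2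
  have hanti : AntitoneOn (fun x : ℝ => x ^ p - (x + t) ^ p) (Set.Ioi 0) := by
    apply antitoneOn_of_deriv_nonpos (convex_Ioi 0)
    · intro x hx
      exact ((hD x hx).continuousAt).continuousWithinAt
    · rw [interior_Ioi]
      intro x hx
      exact ((hD x hx).differentiableAt).differentiableWithinAt
    · rw [interior_Ioi]
      intro x hx
      rw [(hD x hx).deriv]
      have hx0 : (0:ℝ) < x := hx
      have h3 : (x + t) ^ (p - 1) ≤ x ^ (p - 1) :=
        Real.rpow_le_rpow_of_nonpos hx0 (by linarith) (by linarith)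
      nlinarith
  exact hanti ha (lt_of_lt_of_le ha hab) hab

-- interpolation: if 0 ≤ d ≤ X, d ≤ Y, θ ∈ [0,1], then d ≤ X^θ * Y^(1-θ)
lemma interp {d X Y θ : ℝ} (hd : 0 ≤ d) (hX : d ≤ X) (hY : d ≤ Y)
    (hθ0 : 0 ≤ θ) (hθ1 : θ ≤ 1) : d ≤ X ^ θ * Y ^ (1 - θ) := by
  have hX0 : 0 ≤ X := le_trans hd hX
  have hY0 : 0 ≤ Y := le_trans hd hY
  calc d = d ^ (θ + (1 - θ)) := by rw [show θ + (1 - θ) = 1 by ring, Real.rpow_one]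
    _ = d ^ θ * d ^ (1 - θ) := Real.rpow_add' hd (by norm_num)
    _ ≤ X ^ θ * Y ^ (1 - θ) :=
        mul_le_mul (Real.rpow_le_rpow hd hX hθ0) (Real.rpow_le_rpow hd hY (by linarith))
          (Real.rpow_nonneg hd _) (Real.rpow_nonneg hX0 _)

lemma boundStep {d q r v p s : ℝ} (hd : 0 ≤ d) (h1 : d ≤ r ^ p) (h2 : d ≤ q * r ^ (p - 1) * v)
    (hq : 0 < q) (hr : 0 < r) (hv : 0 ≤ v) (hs0 : 0 ≤ s) (hs1 : s ≤ 1) :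
    d ≤ q ^ s * r ^ (p - s) * v ^ s := by
  have key := interp hd h1 h2 (by linarith) (by linarith : (1:ℝ) - s ≤ 1)
  rw [show (1 - (1 - s)) = s by ring] at key
  refine key.trans_eq ?_
  rw [← Real.rpow_mul hr.le, Real.mul_rpow (by positivity) hv,
      Real.mul_rpow hq.le (Real.rpow_nonneg hr.le _), ← Real.rpow_mul hr.le]
  have hrr : r ^ (p * (1 - s)) * r ^ ((p - 1) * s) = r ^ (p - s) := by
    rw [← Real.rpow_add hr]; ring_nf
  calc r ^ (p * (1 - s)) * (q ^ s * r ^ ((p - 1) * s) * v ^ s)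
      = (r ^ (p * (1 - s)) * r ^ ((p - 1) * s)) * q ^ s * v ^ s := by ring
    _ = q ^ s * r ^ (p - s) * v ^ s := by rw [hrr]; ring

lemma combineStep {a v w s θ : ℝ} (ha : 0 < a) (hv : 0 ≤ v) (hw : 0 ≤ w) :
    (a * v ^ s) ^ θ * (a * w ^ s) ^ (1 - θ) = a * v ^ (s * θ) * w ^ (s * (1 - θ)) := by
  rw [Real.mul_rpow ha.le (Real.rpow_nonneg hv s), Real.mul_rpow ha.le (Real.rpow_nonneg hw s),
      ← Real.rpow_mul hv, ← Real.rpow_mul hw]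
  have haa : a ^ θ * a ^ (1 - θ) = a := by
    rw [← Real.rpow_add ha]; norm_num
  calc a ^ θ * v ^ (s * θ) * (a ^ (1 - θ) * w ^ (s * (1 - θ)))
      = (a ^ θ * a ^ (1 - θ)) * v ^ (s * θ) * w ^ (s * (1 - θ)) := by ring
    _ = a * v ^ (s * θ) * w ^ (s * (1 - θ)) := by rw [haa]

theorem stmt9 (H γ : ℝ) (hH0 : 0 < H) (hH : H < 1/2) (hγ1 : 1 - 2 * H < γ) (hγ2 : γ < 1) :
    ∀ (β₁ β₂ : ℝ), 0 < β₁ → 0 < β₂ → β₁ + β₂ < 2 * H →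
    ∃ C > 0, ∀ (r u Δ : ℝ), 0 < r → r < u → Δ ≤ 0 →
      (let h' : ℝ → ℝ := fun x => 2 * H * Real.sign x * |x| ^ (2 * H - 1)
      |h' (r - Δ) - h' (u - Δ) - h' r + h' u|
        ≤ C * r ^ (2 * H - 1 - β₁ - β₂) * (u - r) ^ β₁ * |Δ| ^ β₂) := by
  intro β₁ β₂ hb1 hb2 hsum
  refine ⟨2 * H, by linarith, ?_⟩
  intro r u Δ hr hru hΔ
  have hu : 0 < u := lt_trans hr hru
  have hrd : 0 < r - Δ := by linarith
  have hud : 0 < u - Δ := by linarith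
  show |2 * H * Real.sign (r - Δ) * |r - Δ| ^ (2 * H - 1)
      - 2 * H * Real.sign (u - Δ) * |u - Δ| ^ (2 * H - 1)
      - 2 * H * Real.sign r * |r| ^ (2 * H - 1)
      + 2 * H * Real.sign u * |u| ^ (2 * H - 1)|
      ≤ 2 * H * r ^ (2 * H - 1 - β₁ - β₂) * (u - r) ^ β₁ * |Δ| ^ β₂
  rw [Real.sign_of_pos hrd, Real.sign_of_pos hud, Real.sign_of_pos hr, Real.sign_of_pos hu,
    abs_of_pos hrd, abs_of_pos hud, abs_of_pos hr, abs_of_pos hu, abs_of_nonpos hΔ]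
  set p : ℝ := 2 * H - 1 with hpdef
  have hp : p < 0 := by rw [hpdef]; linarith
  set t : ℝ := -Δ with htdef
  have ht : 0 ≤ t := by rw [htdef]; linarith
  have erd : r - Δ = r + t := by rw [htdef]; ring
  have eud : u - Δ = u + t := by rw [htdef]; ring
  rw [erd, eud]
  set D : ℝ := (r ^ p - (r + t) ^ p) - (u ^ p - (u + t) ^ p) with hDdef
  have hD0 : 0 ≤ D := by
    have := diff_anti hp ht hr hru.le
    rw [hDdef]; linarith
  have habs : |2 * H * 1 * (r + t) ^ p - 2 * H * 1 * (u + t) ^ p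
      - 2 * H * 1 * r ^ p + 2 * H * 1 * u ^ p| = 2 * H * D := by
    rw [show 2 * H * 1 * (r + t) ^ p - 2 * H * 1 * (u + t) ^ p
      - 2 * H * 1 * r ^ p + 2 * H * 1 * u ^ p = -(2 * H * D) by rw [hDdef]; ring,
      abs_neg, abs_of_nonneg (by positivity)]
  rw [habs]
  -- key bounds
  set q : ℝ := -p with hqdef
  have hq : 0 < q := by rw [hqdef]; linarith
  have hq1 : q ≤ 1 := by rw [hqdef, hpdef]; linarith
  have hA : D ≤ r ^ p - u ^ p := by
    have h := Real.rpow_le_rpow_of_nonpos (by linarith : (0:ℝ) < r + t)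
      (by linarith : r + t ≤ u + t) hp.le
    rw [hDdef]; linarith
  have hB : D ≤ r ^ p - (r + t) ^ p := by
    have h := Real.rpow_le_rpow_of_nonpos hu (by linarith : u ≤ u + t) hp.le
    rw [hDdef]; linarith
  have hA1 : r ^ p - u ^ p ≤ r ^ p := by
    have := Real.rpow_nonneg hu.le p; linarith
  have hA2 : r ^ p - u ^ p ≤ q * r ^ (p - 1) * (u - r) := mvt_rpow hp hr hru.le
  have hB1 : r ^ p - (r + t) ^ p ≤ r ^ p := by
    have := Real.rpow_nonneg (by linarith : (0:ℝ) ≤ r + t) p; linarith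
  have hB2 : r ^ p - (r + t) ^ p ≤ q * r ^ (p - 1) * t := by
    have := mvt_rpow hp hr (by linarith : r ≤ r + t)
    rw [show r + t - r = t by ring] at this
    exact this
  set s : ℝ := β₁ + β₂ with hsdef
  have hs0 : 0 < s := by rw [hsdef]; linarith
  have hs1 : s ≤ 1 := by rw [hsdef]; linarith
  set θ : ℝ := β₁ / s with hθdef
  have hθ0 : 0 ≤ θ := by positivity
  have hθ1 : θ ≤ 1 := by
    rw [hθdef, div_le_one hs0, hsdef]; linarith
  have hA0 : 0 ≤ r ^ p - u ^ p := by
    have := Real.rpow_le_rpow_of_nonpos hr hru.le hp.le; linarith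
  have hB0 : 0 ≤ r ^ p - (r + t) ^ p := by
    have := Real.rpow_le_rpow_of_nonpos hr (by linarith : r ≤ r + t) hp.le; linarith
  have hAb : r ^ p - u ^ p ≤ q ^ s * r ^ (p - s) * (u - r) ^ s :=
    boundStep hA0 hA1 hA2 hq hr (by linarith) hs0.le hs1
  have hBb : r ^ p - (r + t) ^ p ≤ q ^ s * r ^ (p - s) * t ^ s :=
    boundStep hB0 hB1 hB2 hq hr ht hs0.le hs1
  have ha : 0 < q ^ s * r ^ (p - s) := by positivity
  have hDfin : D ≤ (q ^ s * r ^ (p - s) * (u - r) ^ s) ^ θ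
      * (q ^ s * r ^ (p - s) * t ^ s) ^ (1 - θ) :=
    interp hD0 (hA.trans hAb) (hB.trans hBb) hθ0 hθ1
  rw [combineStep ha (by linarith : (0:ℝ) ≤ u - r) ht] at hDfin
  have hsθ1 : s * θ = β₁ := by rw [hθdef]; field_simp
  have hsθ2 : s * (1 - θ) = β₂ := by
    rw [hθdef]; field_simp; rw [hsdef]; ring
  rw [hsθ1, hsθ2] at hDfin
  have hqs1 : q ^ s ≤ 1 := Real.rpow_le_one hq.le hq1 hs0.le
  have hps : p - s = 2 * H - 1 - β₁ - β₂ := by rw [hpdef, hsdef]; ring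
  have hfinal : q ^ s * r ^ (p - s) * (u - r) ^ β₁ * t ^ β₂
      ≤ r ^ (2 * H - 1 - β₁ - β₂) * (u - r) ^ β₁ * t ^ β₂ := by
    rw [← hps]
    have h1 : q ^ s * r ^ (p - s) ≤ r ^ (p - s) := by
      have := mul_le_mul_of_nonneg_right hqs1 (Real.rpow_nonneg hr.le (p - s))
      linarith [this]
    have h2 : (0:ℝ) ≤ (u - r) ^ β₁ := Real.rpow_nonneg (by linarith) _
    have h3 : (0:ℝ) ≤ t ^ β₂ := Real.rpow_nonneg ht _
    exact mul_le_mul_of_nonneg_right (mul_le_mul_of_nonneg_right h1 h2) h3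
  calc 2 * H * D ≤ 2 * H * (q ^ s * r ^ (p - s) * (u - r) ^ β₁ * t ^ β₂) := by
        apply mul_le_mul_of_nonneg_left hDfin (by linarith)
    _ ≤ 2 * H * (r ^ (2 * H - 1 - β₁ - β₂) * (u - r) ^ β₁ * t ^ β₂) := by
        apply mul_le_mul_of_nonneg_left hfinal (by linarith)
    _ = 2 * H * r ^ (2 * H - 1 - β₁ - β₂) * (u - r) ^ β₁ * t ^ β₂ := by ring
end

section
/- Let $H\in(0,1/2)$, $T>0$, $0<s\le T$, and let $\phi\in C^{\alpha}([0,T])$ with $\alpha>1-2H$. Define $g^{\varepsilon}(u) = \frac{1}{2\varepsilon}\big((u+\varepsilon)^{2H-1} - \mathrm{sign}(u-\varepsilon)|u-\varepsilon|^{2H-1}\big)$ for $u>0$, $\varepsilon>0$. Then $\lim_{\varepsilon\to 0^+}\Big[\phi(s)\int_0^s g^{\varepsilon}(u)\,du + \int_0^s (\phi(s-u)-\phi(s))\,g^{\varepsilon}(u)\,du\Big] = \phi(s)\,s^{2H-1} + (2H-1)\int_0^s(\phi(s-u)-\phi(s))\,u^{2H-2}\,du$. -/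
open Real Filter Topology MeasureTheory Set

-- symmetric difference quotient
lemma aux_symm (p x : ℝ) (hx : 0 < x) :
    Tendsto (fun ε : ℝ => ((x + ε) ^ p - (x - ε) ^ p) / (2 * ε)) (𝓝[>] 0)
      (𝓝 (p * x ^ (p - 1))) := by
  have hd : HasDerivAt (fun y : ℝ => y ^ p) (p * x ^ (p - 1)) x :=
    Real.hasDerivAt_rpow_const (Or.inl hx.ne')
  have hs := hasDerivAt_iff_tendsto_slope.1 hd
  have t1 : Tendsto (fun ε : ℝ => x + ε) (𝓝[>] 0) (𝓝[≠] x) := by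
    apply tendsto_nhdsWithin_of_tendsto_nhds_of_eventually_within
    · simpa using ((continuous_add_left x).tendsto (0:ℝ)).mono_left
        nhdsWithin_le_nhds
    · filter_upwards [self_mem_nhdsWithin] with ε (hε : 0 < ε)
      simp [hε.ne']
  have t2 : Tendsto (fun ε : ℝ => x - ε) (𝓝[>] 0) (𝓝[≠] x) := by
    apply tendsto_nhdsWithin_of_tendsto_nhds_of_eventually_within
    · simpa using ((continuous_sub_left x).tendsto (0:ℝ)).mono_left
        nhdsWithin_le_nhds
    · filter_upwards [self_mem_nhdsWithin] with ε (hε : 0 < ε)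
      simp [hε.ne']
  have h3 := ((hs.comp t1).add (hs.comp t2)).div_const 2
  have heq : (fun ε : ℝ => (slope (fun y : ℝ => y ^ p) x (x + ε)
      + slope (fun y : ℝ => y ^ p) x (x - ε)) / 2)
      = fun ε : ℝ => ((x + ε) ^ p - (x - ε) ^ p) / (2 * ε) := by
    funext ε
    rcases eq_or_ne ε 0 with h | h
    · simp [h, slope_def_field]
    · rw [slope_def_field, slope_def_field, add_sub_cancel_left, sub_sub_cancel_left,
        div_neg, ← sub_eq_add_neg, ← sub_div, sub_sub_sub_cancel_right, div_div,
        mul_comm ε 2]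
  rw [Function.comp_def, Function.comp_def] at h3
  rw [heq] at h3
  convert h3 using 2
  ring

lemma sign_mul_abs_rpow_of_le {p x c : ℝ} (hp : p ≠ 0) (h : x ≤ c) :
    Real.sign (x - c) * |x - c| ^ p = -((c - x) ^ p) := by
  rcases h.lt_or_eq with h | h
  · rw [Real.sign_of_neg (by linarith), abs_of_neg (by linarith), neg_sub]
    ring
  · simp [h, Real.zero_rpow hp]

lemma sign_mul_abs_rpow_of_ge {p x c : ℝ} (hp : p ≠ 0) (h : c ≤ x) :
    Real.sign (x - c) * |x - c| ^ p = (x - c) ^ p := by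
  rcases h.lt_or_eq with h | h
  · rw [Real.sign_of_pos (by linarith), abs_of_pos (by linarith), one_mul]
  · simp [← h, Real.zero_rpow hp]

lemma S_int0 {r ε : ℝ} (hr1 : -1 < r) (hr0 : r ≠ 0) (hε : 0 < ε) (c : ℝ) (hc : 0 ≤ c) :
    IntervalIntegrable (fun u => Real.sign (u - ε) * |u - ε| ^ r) volume 0 c := by
  have h0ε : IntervalIntegrable (fun u => Real.sign (u - ε) * |u - ε| ^ r) volume 0 ε := by
    have c1 := ((intervalIntegral.intervalIntegrable_rpow' hr1 (a := 0) (b := ε)).comp_sub_left ε).neg.symm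
    rw [sub_zero, sub_self] at c1
    apply c1.congr_ae
    filter_upwards [ae_restrict_mem measurableSet_uIoc] with u hu
    rw [uIoc_of_le hε.le] at hu
    exact (sign_mul_abs_rpow_of_le hr0 hu.2).symm
  rcases le_total c ε with h | h
  · exact h0ε.mono_set (uIcc_subset_uIcc Set.left_mem_uIcc (Set.mem_uIcc.2 (Or.inl ⟨hc, h⟩)))
  · refine h0ε.trans ?_
    have c1 := (intervalIntegral.intervalIntegrable_rpow' hr1 (a := 0) (b := c - ε)).comp_sub_right ε
    rw [zero_add, sub_add_cancel] at c1
    apply c1.congr_ae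
    filter_upwards [ae_restrict_mem measurableSet_uIoc] with u hu
    rw [uIoc_of_le h] at hu
    exact (sign_mul_abs_rpow_of_ge hr0 hu.1.le).symm

lemma shift_int {r ε : ℝ} (hr1 : -1 < r) (hε : 0 < ε) (a b : ℝ) :
    IntervalIntegrable (fun u => (u + ε) ^ r) volume a b := by
  have c1 := (intervalIntegral.intervalIntegrable_rpow' hr1 (a := a + ε) (b := b + ε)).comp_add_right ε
  rwa [add_sub_cancel_right, add_sub_cancel_right] at c1

lemma integral_g {H s ε : ℝ} (hH0 : 0 < H) (hH : H < 1/2) (hε : 0 < ε) (hεs : ε < s) :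
    (∫ u in (0:ℝ)..s,
        ((u + ε) ^ (2 * H - 1) - Real.sign (u - ε) * |u - ε| ^ (2 * H - 1)) / (2 * ε))
      = ((s + ε) ^ (2 * H) - (s - ε) ^ (2 * H)) / (4 * H * ε) := by
  have hr1 : (-1:ℝ) < 2 * H - 1 := by linarith
  have hr0 : (2 * H - 1 : ℝ) ≠ 0 := by intro h; rw [sub_eq_zero] at h; linarith
  have hrr : (2 * H - 1 : ℝ) + 1 = 2 * H := by ring
  have hs0 : (0:ℝ) < s := hε.trans hεs
  have e1 : (∫ u in (0:ℝ)..s, (u + ε) ^ (2 * H - 1))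
      = ((s + ε) ^ (2 * H) - ε ^ (2 * H)) / (2 * H) := by
    rw [intervalIntegral.integral_comp_add_right (fun x => x ^ (2 * H - 1)) ε, zero_add,
      integral_rpow (Or.inl hr1), hrr]
  have e2 : (∫ u in (0:ℝ)..ε, Real.sign (u - ε) * |u - ε| ^ (2 * H - 1))
      = -(ε ^ (2 * H) / (2 * H)) := by
    rw [intervalIntegral.integral_congr (g := fun u => -((ε - u) ^ (2 * H - 1)))
      (fun u hu => by
        rw [uIcc_of_le hε.le] at hu
        exact sign_mul_abs_rpow_of_le hr0 hu.2),
      intervalIntegral.integral_neg,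
      intervalIntegral.integral_comp_sub_left (fun x => x ^ (2 * H - 1)) ε,
      sub_self, sub_zero, integral_rpow (Or.inl hr1), hrr,
      Real.zero_rpow (by positivity), sub_zero]
  have e3 : (∫ u in ε..s, Real.sign (u - ε) * |u - ε| ^ (2 * H - 1))
      = (s - ε) ^ (2 * H) / (2 * H) := by
    rw [intervalIntegral.integral_congr (g := fun u => (u - ε) ^ (2 * H - 1))
      (fun u hu => by
        rw [uIcc_of_le hεs.le] at hu
        exact sign_mul_abs_rpow_of_ge hr0 hu.1),
      intervalIntegral.integral_comp_sub_right (fun x => x ^ (2 * H - 1)) ε,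
      sub_self, integral_rpow (Or.inl hr1), hrr,
      Real.zero_rpow (by positivity), sub_zero]
  have hSa := S_int0 (ε := ε) hr1 hr0 hε ε hε.le
  have hSb := (hSa.symm.trans (S_int0 (ε := ε) hr1 hr0 hε s hs0.le)).symm.symm
  have hSab : IntervalIntegrable (fun u => Real.sign (u - ε) * |u - ε| ^ (2 * H - 1))
      volume ε s := hSa.symm.trans (S_int0 (ε := ε) hr1 hr0 hε s hs0.le)
  have isplit : (∫ u in (0:ℝ)..s, Real.sign (u - ε) * |u - ε| ^ (2 * H - 1))
      = -(ε ^ (2 * H) / (2 * H)) + (s - ε) ^ (2 * H) / (2 * H) := by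
    rw [← intervalIntegral.integral_add_adjacent_intervals hSa hSab, e2, e3]
  rw [intervalIntegral.integral_div, intervalIntegral.integral_sub
    (shift_int hr1 hε 0 s) (S_int0 hr1 hr0 hε s hs0.le), e1, isplit]
  have h2H : (2 * H : ℝ) ≠ 0 := by positivity
  field_simp
  ring

lemma g_tendsto {H u : ℝ} (hH0 : 0 < H) (hH : H < 1/2) (hu : 0 < u) :
    Tendsto (fun ε : ℝ =>
        ((u + ε) ^ (2 * H - 1) - Real.sign (u - ε) * |u - ε| ^ (2 * H - 1)) / (2 * ε))
      (𝓝[>] 0) (𝓝 ((2 * H - 1) * u ^ (2 * H - 1 - 1))) := by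
  have hr0 : (2 * H - 1 : ℝ) ≠ 0 := by intro h; rw [sub_eq_zero] at h; linarith
  apply (aux_symm (2 * H - 1) u hu).congr'
  filter_upwards [Ioo_mem_nhdsGT_of_mem ⟨le_refl (0:ℝ), hu⟩] with ε hε
  rw [sign_mul_abs_rpow_of_ge hr0 hε.2.le]

lemma g_bound {H u ε : ℝ} (hH0 : 0 < H) (hH : H < 1/2) (hε : 0 < ε) (hu : 2 * ε < u) :
    |((u + ε) ^ (2 * H - 1) - (u - ε) ^ (2 * H - 1)) / (2 * ε)| ≤ 4 * u ^ (2 * H - 1 - 1) := by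
  set r : ℝ := 2 * H - 1 with hrdef
  have hr0 : r < 0 := by simp only [hrdef]; linarith
  have hr1 : -1 < r := by simp only [hrdef]; linarith
  have hu0 : 0 < u := lt_trans (by linarith) hu
  have huε : 0 < u - ε := by linarith
  have hle : u - ε ≤ u + ε := by linarith
  have hne : r - 1 ≠ -1 := by intro h; rw [sub_eq_neg_add] at h; linarith [hr0]
  have hmem : (0:ℝ) ∉ Set.uIcc (u - ε) (u + ε) := by
    rw [Set.uIcc_of_le hle]
    intro h0
    exact absurd h0.1 (by linarith)
  have hint : (∫ x in (u - ε)..(u + ε), x ^ (r - 1))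
      = ((u + ε) ^ r - (u - ε) ^ r) / r := by
    rw [integral_rpow (Or.inr ⟨hne, hmem⟩), sub_add_cancel]
  have hbound : ‖∫ x in (u - ε)..(u + ε), x ^ (r - 1)‖
      ≤ (u - ε) ^ (r - 1) * |(u + ε) - (u - ε)| := by
    apply intervalIntegral.norm_integral_le_of_norm_le_const
    intro x hx
    rw [Set.uIoc_of_le hle] at hx
    rw [Real.norm_eq_abs, abs_of_nonneg (Real.rpow_nonneg (by linarith [hx.1]) _)]
    exact Real.rpow_le_rpow_of_nonpos huε hx.1.le (by linarith)
  rw [hint] at hbound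
  have h2ε : (u + ε) - (u - ε) = 2 * ε := by ring
  rw [h2ε, abs_of_pos (by linarith), Real.norm_eq_abs, abs_div, abs_of_neg hr0] at hbound
  -- |(u+ε)^r - (u-ε)^r| ≤ (-r) * ((u-ε)^(r-1) * (2ε)) ≤ (2ε) * (u-ε)^(r-1)
  have key : |(u + ε) ^ r - (u - ε) ^ r| ≤ 2 * ε * (u - ε) ^ (r - 1) := by
    have := (div_le_iff₀ (by linarith : (0:ℝ) < -r)).1 hbound
    calc |(u + ε) ^ r - (u - ε) ^ r| ≤ (u - ε) ^ (r - 1) * (2 * ε) * -r := this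
      _ ≤ (u - ε) ^ (r - 1) * (2 * ε) * 1 := by
          apply mul_le_mul_of_nonneg_left (by linarith)
          positivity
      _ = 2 * ε * (u - ε) ^ (r - 1) := by ring
  have step1 : |((u + ε) ^ r - (u - ε) ^ r) / (2 * ε)| ≤ (u - ε) ^ (r - 1) := by
    rw [abs_div, abs_of_pos (by linarith : (0:ℝ) < 2 * ε), div_le_iff₀ (by linarith)]
    calc |(u + ε) ^ r - (u - ε) ^ r| ≤ 2 * ε * (u - ε) ^ (r - 1) := key
      _ = (u - ε) ^ (r - 1) * (2 * ε) := by ring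
  refine step1.trans ?_
  have step2 : (u - ε) ^ (r - 1) ≤ (u / 2) ^ (r - 1) :=
    Real.rpow_le_rpow_of_nonpos (by linarith) (by linarith) (by linarith)
  refine step2.trans ?_
  rw [Real.div_rpow hu0.le (by norm_num)]
  have h2 : (1:ℝ)/4 ≤ (2:ℝ) ^ (r - 1) := by
    have : (2:ℝ) ^ (-2:ℝ) ≤ (2:ℝ) ^ (r - 1) :=
      Real.rpow_le_rpow_of_exponent_le (by norm_num) (by linarith)
    refine le_trans (le_of_eq ?_) this
    rw [show (-2:ℝ) = ((-2:ℤ):ℝ) by norm_num, Real.rpow_intCast]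
    norm_num
  calc u ^ (r - 1) / (2:ℝ) ^ (r - 1) ≤ u ^ (r - 1) / (1/4) := by
        apply div_le_div_of_nonneg_left (Real.rpow_nonneg hu0.le _) (by norm_num) h2
      _ = 4 * u ^ (r - 1) := by ring

lemma abs_sign_mul (y p : ℝ) : |Real.sign y * |y| ^ p| ≤ |y| ^ p := by
  rw [abs_mul, abs_of_nonneg (Real.rpow_nonneg (abs_nonneg y) p)]
  apply mul_le_of_le_one_left (Real.rpow_nonneg (abs_nonneg y) p)
  rcases Real.sign_apply_eq y with h | h | h <;> rw [h] <;> norm_num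

lemma abs_rpow_int1 {r ε : ℝ} (hr1 : -1 < r) (hε : 0 < ε) :
    IntervalIntegrable (fun u => |u - ε| ^ r) volume 0 ε := by
  have c1 := ((intervalIntegral.intervalIntegrable_rpow' hr1 (a := 0) (b := ε)).comp_sub_left ε).symm
  rw [sub_zero, sub_self] at c1
  apply c1.congr_ae
  filter_upwards [ae_restrict_mem measurableSet_uIoc] with u hu
  rw [uIoc_of_le hε.le] at hu
  rw [abs_of_nonpos (by linarith [hu.2]), neg_sub]

lemma abs_rpow_int2 {r ε c : ℝ} (hr1 : -1 < r) (hc : ε ≤ c) :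
    IntervalIntegrable (fun u => |u - ε| ^ r) volume ε c := by
  have c1 := (intervalIntegral.intervalIntegrable_rpow' hr1 (a := 0) (b := c - ε)).comp_sub_right ε
  rw [zero_add, sub_add_cancel] at c1
  apply c1.congr_ae
  filter_upwards [ae_restrict_mem measurableSet_uIoc] with u hu
  rw [uIoc_of_le hc] at hu
  rw [abs_of_nonneg (by linarith [hu.1])]

lemma small_piece {H α Cα ε : ℝ} (hH0 : 0 < H) (hH : H < 1/2) (hα0 : 0 < α) (hCα : 0 ≤ Cα)
    (hε : 0 < ε) (ψ : ℝ → ℝ) (hψb : ∀ u ∈ Set.Ioc (0:ℝ) (2*ε), |ψ u| ≤ Cα * u ^ α) :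
    ‖∫ u in (0:ℝ)..(2*ε), ψ u *
        (((u + ε) ^ (2*H-1) - Real.sign (u - ε) * |u - ε| ^ (2*H-1)) / (2*ε))‖
      ≤ (Cα * 2 ^ α * (3 ^ (2*H) + 1) / (4*H)) * ε ^ (α + 2*H - 1) := by
  have hr1 : (-1:ℝ) < 2*H-1 := by linarith
  have hrr : (2*H-1 : ℝ) + 1 = 2*H := by ring
  have h2H : (0:ℝ) < 2*H := by linarith
  have h2ε : (0:ℝ) < 2*ε := by linarith
  set G : ℝ → ℝ := fun u => (Cα * (2*ε) ^ α / (2*ε)) * ((u+ε) ^ (2*H-1) + |u-ε| ^ (2*H-1))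
    with hGdef
  have hA : IntervalIntegrable (fun u => (u+ε) ^ (2*H-1)) volume 0 (2*ε) :=
    shift_int hr1 hε 0 (2*ε)
  have habs1 := abs_rpow_int1 (ε := ε) hr1 hε
  have habs2 := abs_rpow_int2 (ε := ε) (c := 2*ε) hr1 (by linarith)
  have habs := habs1.trans habs2
  have hG : IntervalIntegrable G volume 0 (2*ε) := (hA.add habs).const_mul _
  have hptwise : ∀ᵐ t ∂(volume.restrict (Set.uIoc (0:ℝ) (2*ε))),
      ‖ψ t * (((t + ε) ^ (2*H-1) - Real.sign (t - ε) * |t - ε| ^ (2*H-1)) / (2*ε))‖ ≤ G t := by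
    filter_upwards [ae_restrict_mem measurableSet_uIoc] with t ht
    rw [uIoc_of_le h2ε.le] at ht
    rw [norm_mul, Real.norm_eq_abs, Real.norm_eq_abs]
    have hb1 : |ψ t| ≤ Cα * (2*ε) ^ α := by
      refine (hψb t ht).trans ?_
      exact mul_le_mul_of_nonneg_left
        (Real.rpow_le_rpow ht.1.le ht.2 hα0.le) hCα
    have hb2 : |((t + ε) ^ (2*H-1) - Real.sign (t - ε) * |t - ε| ^ (2*H-1)) / (2*ε)|
        ≤ ((t+ε) ^ (2*H-1) + |t-ε| ^ (2*H-1)) / (2*ε) := by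
      rw [abs_div, abs_of_pos h2ε, div_le_div_iff_of_pos_right h2ε]
      refine (abs_sub _ _).trans ?_
      apply add_le_add
      · rw [abs_of_nonneg (Real.rpow_nonneg (by linarith [ht.1]) _)]
      · exact abs_sign_mul _ _
    calc |ψ t| * |((t + ε) ^ (2*H-1) - Real.sign (t - ε) * |t - ε| ^ (2*H-1)) / (2*ε)|
        ≤ (Cα * (2*ε) ^ α) * (((t+ε) ^ (2*H-1) + |t-ε| ^ (2*H-1)) / (2*ε)) := by
          apply mul_le_mul hb1 hb2 (abs_nonneg _)
          positivity
      _ = G t := by rw [hGdef]; ring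
  refine (intervalIntegral.norm_integral_le_of_norm_le h2ε.le (by rw [uIoc_of_le h2ε.le, ae_restrict_iff' measurableSet_Ioc] at hptwise; exact hptwise) hG).trans (le_abs_self _) |>.trans ?_
  have hE1 : (∫ u in (0:ℝ)..(2*ε), (u+ε) ^ (2*H-1))
      = ((3*ε) ^ (2*H) - ε ^ (2*H)) / (2*H) := by
    rw [intervalIntegral.integral_comp_add_right (fun x => x ^ (2*H-1)) ε, zero_add,
      show 2*ε+ε = 3*ε by ring, integral_rpow (Or.inl hr1), hrr]
  have hE2a : (∫ u in (0:ℝ)..ε, |u-ε| ^ (2*H-1)) = ε ^ (2*H) / (2*H) := by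
    rw [intervalIntegral.integral_congr (g := fun u => (ε - u) ^ (2*H-1))
      (fun u hu => by
        rw [uIcc_of_le hε.le] at hu
        rw [abs_of_nonpos (by linarith [hu.2]), neg_sub]),
      intervalIntegral.integral_comp_sub_left (fun x => x ^ (2*H-1)) ε,
      sub_self, sub_zero, integral_rpow (Or.inl hr1), hrr,
      Real.zero_rpow (by positivity), sub_zero]
  have hE2b : (∫ u in ε..(2*ε), |u-ε| ^ (2*H-1)) = ε ^ (2*H) / (2*H) := by
    rw [intervalIntegral.integral_congr (g := fun u => (u - ε) ^ (2*H-1))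
      (fun u hu => by
        rw [uIcc_of_le (by linarith : ε ≤ 2*ε)] at hu
        rw [abs_of_nonneg (by linarith [hu.1])]),
      intervalIntegral.integral_comp_sub_right (fun x => x ^ (2*H-1)) ε,
      sub_self, show 2*ε-ε = ε by ring, integral_rpow (Or.inl hr1), hrr,
      Real.zero_rpow (by positivity), sub_zero]
  have hE2 : (∫ u in (0:ℝ)..(2*ε), |u-ε| ^ (2*H-1))
      = ε ^ (2*H) / (2*H) + ε ^ (2*H) / (2*H) := by
    rw [← intervalIntegral.integral_add_adjacent_intervals habs1 habs2, hE2a, hE2b]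
  have hval : (∫ u in (0:ℝ)..(2*ε), G u)
      = (Cα * 2 ^ α * (3 ^ (2*H) + 1) / (4*H)) * ε ^ (α + 2*H - 1) := by
    rw [hGdef]
    rw [intervalIntegral.integral_const_mul, intervalIntegral.integral_add hA habs,
      hE1, hE2]
    rw [Real.mul_rpow (by norm_num) hε.le, Real.mul_rpow (by norm_num) hε.le,
      show α + 2*H - 1 = α + 2*H + (-1) by ring, Real.rpow_add hε, Real.rpow_add hε,
      Real.rpow_neg_one]
    field_simp
    ring
  rw [hval, abs_of_nonneg]
  · apply mul_nonneg _ (Real.rpow_nonneg hε.le _)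
    apply div_nonneg _ (by linarith)
    apply mul_nonneg (mul_nonneg hCα (Real.rpow_nonneg (by norm_num) _))
    positivity

theorem stmt13 (H T s α : ℝ) (hH0 : 0 < H) (hH : H < 1/2) (hs : 0 < s) (hsT : s ≤ T)
    (hα : 1 - 2 * H < α) (φ : ℝ → ℝ) (Cα : ℝ)
    (hφ : ∀ u ∈ Set.Icc (0 : ℝ) T, ∀ v ∈ Set.Icc (0 : ℝ) T,
      |φ u - φ v| ≤ Cα * |u - v| ^ α) :
    Tendsto (fun ε : ℝ =>
        φ s * (∫ u in (0:ℝ)..s,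
            ((u + ε) ^ (2 * H - 1) - Real.sign (u - ε) * |u - ε| ^ (2 * H - 1))
              / (2 * ε))
          + ∫ u in (0:ℝ)..s, (φ (s - u) - φ s) *
              (((u + ε) ^ (2 * H - 1) - Real.sign (u - ε) * |u - ε| ^ (2 * H - 1))
                / (2 * ε)))
      (𝓝[>] 0)
      (𝓝 (φ s * s ^ (2 * H - 1) +
        (2 * H - 1) * ∫ u in (0:ℝ)..s, (φ (s - u) - φ s) * u ^ (2 * H - 2))) := by
  have hT : 0 < T := lt_of_lt_of_le hs hsT
  have hα0 : 0 < α := by linarith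
  have hr1 : (-1:ℝ) < 2 * H - 1 := by linarith
  have hr0 : (2 * H - 1 : ℝ) ≠ 0 := by intro h; rw [sub_eq_zero] at h; linarith
  have h2H : (0:ℝ) < 2 * H := by linarith
  have hCα : 0 ≤ Cα := by
    by_contra hc
    push_neg at hc
    have h1 := hφ 0 ⟨le_refl 0, hT.le⟩ T ⟨hT.le, le_refl T⟩
    have h2 : Cα * |(0:ℝ) - T| ^ α < 0 := by
      apply mul_neg_of_neg_of_pos hc
      rw [zero_sub, abs_neg, abs_of_pos hT]
      positivity
    linarith [abs_nonneg (φ 0 - φ T)]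
  set ψ : ℝ → ℝ := fun u => φ (s - u) - φ s with hψdef
  have hψb : ∀ u ∈ Set.Icc (0:ℝ) s, |ψ u| ≤ Cα * u ^ α := by
    intro u hu
    have h := hφ (s - u) ⟨by linarith [hu.2], by linarith [hu.1]⟩ s ⟨hs.le, hsT⟩
    have he : |(s - u) - s| = u := by
      rw [sub_sub_cancel_left, abs_neg, abs_of_nonneg hu.1]
    rwa [he] at h
  have hψc : ContinuousOn ψ (Set.Icc 0 s) := by
    intro x hx
    rw [ContinuousWithinAt, tendsto_iff_dist_tendsto_zero]
    apply squeeze_zero' (g := fun u => Cα * |u - x| ^ α)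
    · exact Eventually.of_forall fun u => dist_nonneg
    · filter_upwards [eventually_mem_nhdsWithin] with u hu
      have h := hφ (s - u) ⟨by linarith [hu.2], by linarith [hu.1]⟩
        (s - x) ⟨by linarith [hx.2], by linarith [hx.1]⟩
      have he : |(s - u) - (s - x)| = |u - x| := by
        rw [show (s - u) - (s - x) = -(u - x) by ring, abs_neg]
      rw [he] at h
      have hd : ψ u - ψ x = φ (s - u) - φ (s - x) := by
        simp only [hψdef]
        ring
      rw [Real.dist_eq, hd]
      exact h
    · have h1 : Tendsto (fun u : ℝ => |u - x|) (𝓝[Set.Icc 0 s] x) (𝓝 0) := by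
        have h0 : Tendsto (fun u : ℝ => |u - x|) (𝓝 x) (𝓝 |x - x|) :=
          ((continuous_id.sub continuous_const).abs).tendsto x
        rw [sub_self, abs_zero] at h0
        exact h0.mono_left nhdsWithin_le_nhds
      have h2 : ContinuousAt (fun y : ℝ => y ^ α) 0 :=
        Real.continuousAt_rpow_const 0 α (Or.inr hα0.le)
      have h3 := (h2.tendsto.comp h1)
      rw [Real.zero_rpow hα0.ne'] at h3
      simpa using h3.const_mul Cα
  have hψm : AEStronglyMeasurable ψ (volume.restrict (Set.Ioc 0 s)) :=
    (hψc.mono Set.Ioc_subset_Icc_self).aestronglyMeasurable measurableSet_Ioc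
  -- multiplication by ψ preserves interval integrability within [0, s]
  have keymul : ∀ a b : ℝ, 0 ≤ a → a ≤ b → b ≤ s → ∀ g : ℝ → ℝ,
      IntervalIntegrable g volume a b →
      IntervalIntegrable (fun u => ψ u * g u) volume a b := by
    intro a b ha hab hbs g hg
    rw [intervalIntegrable_iff, uIoc_of_le hab] at hg ⊢
    apply hg.bdd_mul (c := Cα * s ^ α)
    · exact (hψc.mono (fun u hu => ⟨by linarith [hu.1], by linarith [hu.2]⟩)).aestronglyMeasurable
        measurableSet_Ioc
    · rw [ae_restrict_iff' measurableSet_Ioc]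
      apply Eventually.of_forall
      intro u hu
      have h1 := hψb u ⟨by linarith [hu.1], by linarith [hu.2]⟩
      refine h1.trans ?_
      apply mul_le_mul_of_nonneg_left _ hCα
      exact Real.rpow_le_rpow (by linarith [hu.1]) (by linarith [hu.2]) hα0.le
  -- Part A
  have hA : Tendsto (fun ε : ℝ => ∫ u in (0:ℝ)..s,
      ((u + ε) ^ (2 * H - 1) - Real.sign (u - ε) * |u - ε| ^ (2 * H - 1)) / (2 * ε))
      (𝓝[>] 0) (𝓝 (s ^ (2 * H - 1))) := by
    have h1 := (aux_symm (2 * H) s hs).div_const (2 * H)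
    rw [mul_div_cancel_left₀ _ (ne_of_gt h2H)] at h1
    apply h1.congr'
    filter_upwards [Ioo_mem_nhdsGT_of_mem ⟨le_refl (0:ℝ), hs⟩] with ε hε
    rw [integral_g hH0 hH hε.1 hε.2, div_div, show 2 * ε * (2 * H) = 4 * H * ε by ring]
  -- Part B : small piece
  have hsmall : Tendsto (fun ε : ℝ => ∫ u in (0:ℝ)..(2*ε), ψ u *
      (((u + ε) ^ (2*H-1) - Real.sign (u - ε) * |u - ε| ^ (2*H-1)) / (2*ε)))
      (𝓝[>] 0) (𝓝 0) := by
    apply squeeze_zero_norm' (a := fun ε : ℝ =>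
      (Cα * 2 ^ α * (3 ^ (2*H) + 1) / (4*H)) * ε ^ (α + 2*H - 1))
    · filter_upwards [Ioo_mem_nhdsGT_of_mem ⟨le_refl (0:ℝ), half_pos hs⟩] with ε hε
      apply small_piece hH0 hH hα0 hCα hε.1 ψ
      intro u hu
      refine hψb u ⟨hu.1.le, ?_⟩
      have := hε.2
      rw [lt_div_iff₀ (by norm_num : (0:ℝ) < 2)] at this
      linarith [hu.2]
    · have hp : 0 < α + 2*H - 1 := by linarith
      have hc : ContinuousAt (fun x : ℝ => x ^ (α + 2*H - 1)) 0 :=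
        Real.continuousAt_rpow_const 0 _ (Or.inr hp.le)
      have h3 := hc.tendsto.mono_left (nhdsWithin_le_nhds (s := Set.Ioi (0:ℝ)))
      rw [Real.zero_rpow hp.ne'] at h3
      simpa using h3.const_mul (Cα * 2 ^ α * (3 ^ (2*H) + 1) / (4*H))
  -- Part B : main piece via dominated convergence
  have hDCT : Tendsto (fun ε : ℝ => ∫ u in (2*ε)..s, ψ u *
      (((u + ε) ^ (2*H-1) - Real.sign (u - ε) * |u - ε| ^ (2*H-1)) / (2*ε)))
      (𝓝[>] 0)
      (𝓝 (∫ u in Set.Ioc (0:ℝ) s, ψ u * ((2*H-1) * u ^ (2*H-1-1)))) := by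
    set F : ℝ → ℝ → ℝ := fun ε => Set.indicator (Set.Ioc (2*ε) s)
      (fun u => ψ u * (((u + ε) ^ (2*H-1) - Real.sign (u - ε) * |u - ε| ^ (2*H-1)) / (2*ε)))
      with hFdef
    have hF_eq : ∀ ε : ℝ, 0 < ε → F ε = Set.indicator (Set.Ioc (2*ε) s)
        (fun u => ψ u * (((u + ε) ^ (2*H-1) - (u - ε) ^ (2*H-1)) / (2*ε))) := by
      intro ε hε
      apply Set.indicator_congr
      intro u hu
      dsimp only
      rw [sign_mul_abs_rpow_of_ge hr0 (by linarith [hu.1] : ε ≤ u)]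
    have hbase : Tendsto (fun ε : ℝ => ∫ u in Set.Ioc (0:ℝ) s, F ε u)
        (𝓝[>] 0) (𝓝 (∫ u in Set.Ioc (0:ℝ) s, ψ u * ((2*H-1) * u ^ (2*H-1-1)))) := by
      apply tendsto_integral_filter_of_dominated_convergence
        (bound := fun u => (Cα * 4) * u ^ (α + (2*H-1-1)))
      · -- measurability
        filter_upwards [self_mem_nhdsWithin] with ε (hε : 0 < ε)
        rw [hF_eq ε hε]
        apply AEStronglyMeasurable.indicator _ measurableSet_Ioc
        apply hψm.mul
        apply Measurable.aestronglyMeasurable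
        apply Measurable.div_const
        exact ((measurable_id.add_const ε).pow measurable_const).sub
          ((measurable_id.sub_const ε).pow measurable_const)
      · -- bound
        filter_upwards [self_mem_nhdsWithin] with ε (hε : 0 < ε)
        rw [ae_restrict_iff' measurableSet_Ioc]
        apply Eventually.of_forall
        intro u hu
        by_cases hmem : u ∈ Set.Ioc (2*ε) s
        · rw [hFdef]
          simp only [Set.indicator_of_mem hmem]
          rw [sign_mul_abs_rpow_of_ge hr0 (by linarith [hmem.1] : ε ≤ u), norm_mul,
            Real.norm_eq_abs, Real.norm_eq_abs]
          have hb1 : |ψ u| ≤ Cα * u ^ α := hψb u ⟨hu.1.le, hu.2⟩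
          have hb2 := g_bound hH0 hH hε hmem.1
          calc |ψ u| * |((u + ε) ^ (2*H-1) - (u - ε) ^ (2*H-1)) / (2*ε)|
              ≤ (Cα * u ^ α) * (4 * u ^ (2*H-1-1)) := by
                apply mul_le_mul hb1 hb2 (abs_nonneg _)
                apply mul_nonneg hCα (Real.rpow_nonneg hu.1.le _)
            _ = (Cα * 4) * u ^ (α + (2*H-1-1)) := by
                rw [Real.rpow_add hu.1]
                ring
        · rw [hFdef]
          simp only [Set.indicator_of_notMem hmem]
          rw [norm_zero]
          apply mul_nonneg (by linarith) (Real.rpow_nonneg hu.1.le _)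
      · -- integrability of bound
        exact ((intervalIntegral.intervalIntegrable_rpow'
          (by linarith : (-1:ℝ) < α + (2*H-1-1)) (a := 0) (b := s)).const_mul (Cα * 4)).1
      · -- pointwise limit
        rw [ae_restrict_iff' measurableSet_Ioc]
        apply Eventually.of_forall
        intro u hu
        apply ((g_tendsto hH0 hH hu.1).const_mul (ψ u)).congr'
        filter_upwards [Ioo_mem_nhdsGT_of_mem ⟨le_refl (0:ℝ), half_pos hu.1⟩] with ε hε
        have hmem : u ∈ Set.Ioc (2*ε) s := by
          constructor
          · have := hε.2; rw [lt_div_iff₀ (by norm_num : (0:ℝ) < 2)] at this; linarith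
          · exact hu.2
        rw [hFdef]
        simp only [Set.indicator_of_mem hmem]
    apply hbase.congr'
    filter_upwards [Ioo_mem_nhdsGT_of_mem ⟨le_refl (0:ℝ), half_pos hs⟩] with ε hε
    have h2εs : 2*ε ≤ s := by
      have := hε.2; rw [lt_div_iff₀ (by norm_num : (0:ℝ) < 2)] at this; linarith
    rw [hFdef, MeasureTheory.setIntegral_indicator measurableSet_Ioc,
      Set.inter_eq_self_of_subset_right (Set.Ioc_subset_Ioc_left (by linarith [hε.1])),
      intervalIntegral.integral_of_le h2εs]
  -- assemble Part B
  have hB : Tendsto (fun ε : ℝ => ∫ u in (0:ℝ)..s, ψ u *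
      (((u + ε) ^ (2*H-1) - Real.sign (u - ε) * |u - ε| ^ (2*H-1)) / (2*ε)))
      (𝓝[>] 0)
      (𝓝 ((2 * H - 1) * ∫ u in (0:ℝ)..s, ψ u * u ^ (2 * H - 2))) := by
    have hsum := hsmall.add hDCT
    rw [zero_add] at hsum
    have hval : (∫ u in Set.Ioc (0:ℝ) s, ψ u * ((2*H-1) * u ^ (2*H-1-1)))
        = (2 * H - 1) * ∫ u in (0:ℝ)..s, ψ u * u ^ (2 * H - 2) := by
      rw [← intervalIntegral.integral_of_le hs.le, ← intervalIntegral.integral_const_mul]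
      apply intervalIntegral.integral_congr
      intro u _
      rw [show (2*H-1-1 : ℝ) = 2*H-2 by ring]
      ring
    rw [hval] at hsum
    apply hsum.congr'
    filter_upwards [Ioo_mem_nhdsGT_of_mem ⟨le_refl (0:ℝ), half_pos hs⟩] with ε hε
    have h2εs : 2*ε ≤ s := by
      have := hε.2; rw [lt_div_iff₀ (by norm_num : (0:ℝ) < 2)] at this; linarith
    have hg1 : IntervalIntegrable (fun u =>
        ((u + ε) ^ (2*H-1) - Real.sign (u - ε) * |u - ε| ^ (2*H-1)) / (2*ε))
        volume 0 (2*ε) :=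
      ((shift_int hr1 hε.1 0 (2*ε)).sub (S_int0 hr1 hr0 hε.1 (2*ε) (by linarith [hε.1]))).div_const _
    have hg2 : IntervalIntegrable (fun u =>
        ((u + ε) ^ (2*H-1) - Real.sign (u - ε) * |u - ε| ^ (2*H-1)) / (2*ε))
        volume (2*ε) s := by
      apply IntervalIntegrable.div_const
      apply IntervalIntegrable.sub
      · exact (shift_int hr1 hε.1 0 (2*ε)).symm.trans (shift_int hr1 hε.1 0 s)
      · exact (S_int0 hr1 hr0 hε.1 (2*ε) (by linarith [hε.1])).symm.trans
          (S_int0 hr1 hr0 hε.1 s hs.le)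
    exact intervalIntegral.integral_add_adjacent_intervals
      (keymul 0 (2*ε) (le_refl 0) (by linarith [hε.1]) h2εs _ hg1)
      (keymul (2*ε) s (by linarith [hε.1]) h2εs (le_refl s) _ hg2)
  exact (hA.const_mul (φ s)).add hB
end

section
/- Let $H\in(0,1/2)$, $T>0$, and $1-2H<\beta<\alpha'<1$. Then there is a constant $C=C(H,\beta,\alpha',T)$ such that for all $\Delta\le 0$ and all $0\le t\le T$: $\int_0^t\int_0^s \frac{|h'(r-\Delta)-h'(r)|}{(s-r)^{1-\alpha'}}\,dr\,ds \le C\,|\Delta|^{2H+\gamma-1}$ for every $\gamma$ with $1-2H<\gamma<1$ and with $C$ also depending on $\gamma$, where $h'(r)=2H\,\mathrm{sign}(r)|r|^{2H-1}$. -/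
open Real MeasureTheory

lemma aux_mvt (p a b : ℝ) (hp : p < 0) (ha : 0 < a) (hab : a ≤ b) :
    a ^ p - b ^ p ≤ (-p) * a ^ (p - 1) * (b - a) := by
  rcases eq_or_lt_of_le hab with rfl | hab
  · simp
  · obtain ⟨c, hc, hc'⟩ := exists_hasDerivAt_eq_slope (fun x => x ^ p)
      (fun x => p * x ^ (p - 1)) hab
      (fun x hx => (Real.continuousAt_rpow_const x p
        (Or.inl (ne_of_gt (lt_of_lt_of_le ha hx.1)))).continuousWithinAt)
      (fun x hx => Real.hasDerivAt_rpow_const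
        (Or.inl (ne_of_gt (lt_trans ha hx.1))))
    have hca : a ≤ c := hc.1.le
    have hcp : c ^ (p - 1) ≤ a ^ (p - 1) :=
      Real.rpow_le_rpow_of_nonpos ha hca (by linarith)
    have hba : 0 < b - a := by linarith
    have : a ^ p - b ^ p = (-p) * c ^ (p - 1) * (b - a) := by
      have := hc'
      field_simp at this
      nlinarith [this]
    rw [this]
    have h0 : 0 < -p := by linarith
    exact mul_le_mul_of_nonneg_right (mul_le_mul_of_nonneg_left hcp h0.le) hba.le

lemma aux_interp (A B θ : ℝ) (hA : 0 ≤ A) (hB : 0 ≤ B) (h0 : 0 ≤ θ) (h1 : θ ≤ 1) :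
    min A B ≤ A ^ (1 - θ) * B ^ θ := by
  rcases le_total A B with h | h
  · calc min A B ≤ A := min_le_left _ _
      _ = A ^ (1 - θ) * A ^ θ := by
          rw [← Real.rpow_add' hA (by norm_num), sub_add_cancel, Real.rpow_one]
      _ ≤ A ^ (1 - θ) * B ^ θ := by
          exact mul_le_mul_of_nonneg_left (Real.rpow_le_rpow hA h h0) (Real.rpow_nonneg hA _)
  · calc min A B ≤ B := min_le_right _ _
      _ = B ^ (1 - θ) * B ^ θ := by
          rw [← Real.rpow_add' hB (by norm_num), sub_add_cancel, Real.rpow_one]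
      _ ≤ A ^ (1 - θ) * B ^ θ := by
          exact mul_le_mul_of_nonneg_right (Real.rpow_le_rpow hB h (by linarith)) (Real.rpow_nonneg hB _)

lemma aux_ptwise (H γ Δ r : ℝ) (hH0 : 0 < H) (hH : H < 1/2)
    (hγ1 : 1 - 2 * H < γ) (hγ2 : γ < 1) (hΔ : Δ ≤ 0) (hr : 0 < r) :
    |2 * H * Real.sign (r - Δ) * |r - Δ| ^ (2 * H - 1)
      - 2 * H * Real.sign r * |r| ^ (2 * H - 1)|
      ≤ 2 * H * (r ^ (-γ) * |Δ| ^ (2 * H + γ - 1)) := by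
  have hrΔ : 0 < r - Δ := by linarith
  set θ := 2 * H + γ - 1 with hθ
  have hθ0 : 0 ≤ θ := by simp only [hθ]; linarith
  have hθ1 : θ ≤ 1 := by simp only [hθ]; linarith
  set p := 2 * H - 1 with hp
  have hple : (r - Δ) ^ p ≤ r ^ p :=
    Real.rpow_le_rpow_of_nonpos hr (by linarith) (by simp only [hp]; linarith)
  rw [Real.sign_of_pos hr, Real.sign_of_pos hrΔ, abs_of_pos hr, abs_of_pos hrΔ,
    mul_one]
  have habs : |2 * H * (r - Δ) ^ p - 2 * H * r ^ p| = 2 * H * (r ^ p - (r - Δ) ^ p) := by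
    rw [abs_of_nonpos (by nlinarith)]; ring
  rw [habs]
  have hmain : r ^ p - (r - Δ) ^ p ≤ r ^ (-γ) * |Δ| ^ θ := by
    have h1 : r ^ p - (r - Δ) ^ p ≤ r ^ p := by
      linarith [Real.rpow_nonneg hrΔ.le p]
    have h2 : r ^ p - (r - Δ) ^ p ≤ (-p) * r ^ (p - 1) * |Δ| := by
      have h := aux_mvt p r (r - Δ) (by simp only [hp]; linarith) hr (by linarith)
      rwa [show r - Δ - r = -Δ by ring, ← abs_of_nonpos hΔ] at h
    calc r ^ p - (r - Δ) ^ p ≤ min (r ^ p) ((-p) * r ^ (p - 1) * |Δ|) := le_min h1 h2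
      _ ≤ (r ^ p) ^ (1 - θ) * ((-p) * r ^ (p - 1) * |Δ|) ^ θ :=
          aux_interp _ _ _ (Real.rpow_nonneg hr.le _)
            (mul_nonneg (mul_nonneg (by simp only [hp]; linarith)
              (Real.rpow_nonneg hr.le _)) (abs_nonneg _)) hθ0 hθ1
      _ = (-p) ^ θ * (r ^ (p * (1 - θ)) * r ^ ((p - 1) * θ) * |Δ| ^ θ) := by
          rw [Real.mul_rpow (mul_nonneg (by simp only [hp]; linarith)
              (Real.rpow_nonneg hr.le _)) (abs_nonneg _),
            Real.mul_rpow (by simp only [hp]; linarith) (Real.rpow_nonneg hr.le _),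
            ← Real.rpow_mul hr.le, ← Real.rpow_mul hr.le]
          ring
      _ = (-p) ^ θ * (r ^ (-γ) * |Δ| ^ θ) := by
          rw [← Real.rpow_add hr]
          congr 2
          simp only [hp, hθ]; ring
      _ ≤ 1 * (r ^ (-γ) * |Δ| ^ θ) := by
          refine mul_le_mul_of_nonneg_right ?_ (by positivity)
          exact Real.rpow_le_one (by simp only [hp]; linarith)
            (by simp only [hp]; linarith) hθ0
      _ = r ^ (-γ) * |Δ| ^ θ := one_mul _
  calc 2 * H * (r ^ p - (r - Δ) ^ p) ≤ 2 * H * (r ^ (-γ) * |Δ| ^ θ) :=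
        mul_le_mul_of_nonneg_left hmain (by linarith)

theorem stmt15 (H T β α' γ : ℝ) (hH0 : 0 < H) (hH : H < 1/2) (hT : 0 < T)
    (hβ1 : 1 - 2 * H < β) (hβα : β < α') (hα' : α' < 1)
    (hγ1 : 1 - 2 * H < γ) (hγ2 : γ < 1) :
    ∃ C > 0, ∀ (Δ t : ℝ), Δ ≤ 0 → 0 ≤ t → t ≤ T →
      (∫ s in (0:ℝ)..t, ∫ r in (0:ℝ)..s,
          |2 * H * Real.sign (r - Δ) * |r - Δ| ^ (2 * H - 1)
            - 2 * H * Real.sign r * |r| ^ (2 * H - 1)|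
            / (s - r) ^ (1 - α'))
        ≤ C * |Δ| ^ (2 * H + γ - 1) := by
  have hα'0 : 0 < α' := by linarith
  have hγ0 : 0 < γ := by linarith
  have hαγ : -1 < α' - γ := by linarith
  set θ := 2 * H + γ - 1 with hθ
  set C2 : ℝ := (2:ℝ) ^ (1 - α') / (1 - γ) + (2:ℝ) ^ γ / α' with hC2
  have hC2pos : 0 < C2 := by
    have h1 : (0:ℝ) < (2:ℝ) ^ (1 - α') := Real.rpow_pos_of_pos (by norm_num) _
    have h2 : (0:ℝ) < (2:ℝ) ^ γ := Real.rpow_pos_of_pos (by norm_num) _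
    have := div_pos h1 (by linarith : (0:ℝ) < 1 - γ)
    have := div_pos h2 hα'0
    simp only [hC2]; linarith
  have hTpow : 0 < T ^ (α' - γ + 1) := Real.rpow_pos_of_pos hT _
  refine ⟨2 * H * C2 * T ^ (α' - γ + 1) / (α' - γ + 1),
    div_pos (mul_pos (mul_pos (by linarith) hC2pos) hTpow) (by linarith), ?_⟩
  intro Δ t hΔ ht0 htT
  set f : ℝ → ℝ → ℝ := fun s r =>
    |2 * H * Real.sign (r - Δ) * |r - Δ| ^ (2 * H - 1)
      - 2 * H * Real.sign r * |r| ^ (2 * H - 1)| / (s - r) ^ (1 - α') with hf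
  have hfnonneg : ∀ s r : ℝ, r ≤ s → 0 ≤ f s r := by
    intro s r hrs
    exact div_nonneg (abs_nonneg _) (Real.rpow_nonneg (by linarith) _)
  -- inner bound
  have inner : ∀ s : ℝ, 0 < s →
      (∫ r in (0:ℝ)..s, f s r) ≤ 2 * H * |Δ| ^ θ * C2 * s ^ (α' - γ) := by
    intro s hs0
    have hs2 : 0 < s / 2 := by linarith
    set g : ℝ → ℝ := fun r => 2 * H * |Δ| ^ θ *
      ((s/2) ^ (α' - 1) * r ^ (-γ) + (s/2) ^ (-γ) * (s - r) ^ (α' - 1)) with hg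
    have h1 : IntervalIntegrable (fun r : ℝ => r ^ (-γ)) volume 0 s :=
      intervalIntegral.intervalIntegrable_rpow' (by linarith)
    have h2 : IntervalIntegrable (fun r : ℝ => (s - r) ^ (α' - 1)) volume 0 s := by
      have h := (intervalIntegral.intervalIntegrable_rpow'
        (show (-1:ℝ) < α' - 1 by linarith) (a := 0) (b := s)).comp_sub_left s
      simpa using h.symm
    have hgi : IntervalIntegrable g volume 0 s := by
      exact (((h1.const_mul _).add (h2.const_mul _)).const_mul _)
    have hΔθ : (0:ℝ) ≤ |Δ| ^ θ := Real.rpow_nonneg (abs_nonneg _) _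
    have hcnn' : (0:ℝ) ≤ 2 * H * |Δ| ^ θ :=
      mul_nonneg (by linarith) hΔθ
    have hgnonneg : ∀ r : ℝ, 0 ≤ r → r ≤ s → 0 ≤ g r := by
      intro r h0 h1
      have hsr' : (0:ℝ) ≤ s - r := by linarith
      refine mul_nonneg hcnn' (add_nonneg (mul_nonneg ?_ ?_) (mul_nonneg ?_ ?_)) <;>
        exact Real.rpow_nonneg (by linarith) _
    have hle : ∀ r ∈ Set.Ioc (0:ℝ) s, f s r ≤ g r := by
      intro r hr
      rcases lt_or_eq_of_le hr.2 with hrs | hrs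
      · have hsr : 0 < s - r := by linarith
        have hkey := aux_ptwise H γ Δ r hH0 hH hγ1 hγ2 hΔ hr.1
        have hden : (s - r) ^ (1 - α') > 0 := Real.rpow_pos_of_pos hsr _
        have hstep : f s r ≤ 2 * H * |Δ| ^ θ * (r ^ (-γ) * (s - r) ^ (α' - 1)) := by
          rw [hf]
          rw [div_le_iff₀ hden]
          calc |2 * H * Real.sign (r - Δ) * |r - Δ| ^ (2 * H - 1)
              - 2 * H * Real.sign r * |r| ^ (2 * H - 1)|
              ≤ 2 * H * (r ^ (-γ) * |Δ| ^ θ) := hkey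
            _ = 2 * H * |Δ| ^ θ * (r ^ (-γ) * (s - r) ^ (α' - 1)) * (s - r) ^ (1 - α') := by
                have hone : (s - r) ^ (α' - 1) * (s - r) ^ (1 - α') = 1 := by
                  rw [← Real.rpow_add hsr]; norm_num
                rw [show 2 * H * |Δ| ^ θ * (r ^ (-γ) * (s - r) ^ (α' - 1)) * (s - r) ^ (1 - α')
                  = 2 * H * (r ^ (-γ) * |Δ| ^ θ) * ((s - r) ^ (α' - 1) * (s - r) ^ (1 - α'))
                  by ring, hone, mul_one]
        refine hstep.trans ?_
        rw [hg]
        rcases le_total r (s/2) with hhalf | hhalf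
        · have hb : (s - r) ^ (α' - 1) ≤ (s/2) ^ (α' - 1) :=
            Real.rpow_le_rpow_of_nonpos hs2 (by linarith) (by linarith)
          have : r ^ (-γ) * (s - r) ^ (α' - 1) ≤ (s/2) ^ (α' - 1) * r ^ (-γ) := by
            rw [mul_comm ((s/2) ^ (α' - 1))]
            exact mul_le_mul_of_nonneg_left hb (Real.rpow_nonneg hr.1.le _)
          have h2nn : (0:ℝ) ≤ (s/2) ^ (-γ) * (s - r) ^ (α' - 1) :=
            mul_nonneg (Real.rpow_nonneg hs2.le _) (Real.rpow_nonneg (by linarith) _)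
          have hc : (0:ℝ) ≤ 2 * H * |Δ| ^ θ := hcnn'
          nlinarith [mul_le_mul_of_nonneg_left this hc, mul_nonneg hc h2nn]
        · have hb : r ^ (-γ) ≤ (s/2) ^ (-γ) :=
            Real.rpow_le_rpow_of_nonpos hs2 hhalf (by linarith)
          have : r ^ (-γ) * (s - r) ^ (α' - 1) ≤ (s/2) ^ (-γ) * (s - r) ^ (α' - 1) :=
            mul_le_mul_of_nonneg_right hb (Real.rpow_nonneg hsr.le _)
          have h2nn : (0:ℝ) ≤ (s/2) ^ (α' - 1) * r ^ (-γ) :=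
            mul_nonneg (Real.rpow_nonneg hs2.le _) (Real.rpow_nonneg hr.1.le _)
          have hc : (0:ℝ) ≤ 2 * H * |Δ| ^ θ := hcnn'
          nlinarith [mul_le_mul_of_nonneg_left this hc, mul_nonneg hc h2nn]
      · -- r = s : denominator is 0
        rw [hf]
        simp only [← hrs, sub_self]
        rw [Real.zero_rpow (by linarith : 1 - α' ≠ 0), div_zero]
        exact hgnonneg r hr.1.le hr.2
    have hmono : (∫ r in (0:ℝ)..s, f s r) ≤ ∫ r in (0:ℝ)..s, g r := by
      rw [intervalIntegral.integral_of_le hs0.le, intervalIntegral.integral_of_le hs0.le]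
      refine integral_mono_of_nonneg ?_ (hgi.1) ?_
      · filter_upwards [ae_restrict_mem measurableSet_Ioc] with r hr
        exact hfnonneg s r hr.2
      · filter_upwards [ae_restrict_mem measurableSet_Ioc] with r hr
        exact hle r hr
    refine hmono.trans ?_
    have hval : (∫ r in (0:ℝ)..s, g r) = 2 * H * |Δ| ^ θ *
        ((s/2) ^ (α' - 1) * (s ^ (1 - γ) / (1 - γ)) + (s/2) ^ (-γ) * (s ^ α' / α')) := by
      rw [hg]
      rw [intervalIntegral.integral_const_mul]
      rw [intervalIntegral.integral_add (h1.const_mul _) (h2.const_mul _)]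
      rw [intervalIntegral.integral_const_mul, intervalIntegral.integral_const_mul]
      congr 1
      congr 1
      · congr 1
        rw [integral_rpow (Or.inl (by linarith : (-1:ℝ) < -γ)),
          Real.zero_rpow (by linarith : -γ + 1 ≠ 0), show -γ + 1 = 1 - γ by ring]
        norm_num
      · congr 1
        rw [intervalIntegral.integral_comp_sub_left (fun x => x ^ (α' - 1)) s]
        simp only [sub_self, sub_zero]
        rw [integral_rpow (Or.inl (by linarith : (-1:ℝ) < α' - 1)),
          Real.zero_rpow (by linarith : α' - 1 + 1 ≠ 0), show α' - 1 + 1 = α' by ring]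
        norm_num
    rw [hval]
    have hsplit : (s/2) ^ (α' - 1) * (s ^ (1 - γ) / (1 - γ)) + (s/2) ^ (-γ) * (s ^ α' / α')
        = C2 * s ^ (α' - γ) := by
      have e1 : ∀ q : ℝ, (s/2) ^ q = s ^ q * 2 ^ (-q) := by
        intro q
        rw [Real.div_rpow hs0.le (by norm_num : (0:ℝ) ≤ 2), Real.rpow_neg (by norm_num),
          div_eq_mul_inv]
      rw [e1, e1, hC2]
      rw [show s ^ (α' - 1) * 2 ^ (-(α' - 1)) * (s ^ (1 - γ) / (1 - γ))
          = (s ^ (α' - 1) * s ^ (1 - γ)) * (2 ^ (-(α' - 1)) / (1 - γ)) by ring]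
      rw [show s ^ (-γ) * 2 ^ (-(-γ)) * (s ^ α' / α')
          = (s ^ (-γ) * s ^ α') * (2 ^ (-(-γ)) / α') by ring]
      rw [← Real.rpow_add hs0, ← Real.rpow_add hs0]
      rw [show α' - 1 + (1 - γ) = α' - γ by ring, show -γ + α' = α' - γ by ring,
        show -(α' - 1) = 1 - α' by ring, show -(-γ) = γ by ring]
      ring
    rw [hsplit]
    ring_nf
    exact le_refl _
  -- outer
  have hFnonneg : ∀ s ∈ Set.Ioc (0:ℝ) t, 0 ≤ ∫ r in (0:ℝ)..s, f s r := by
    intro s hs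
    exact intervalIntegral.integral_nonneg hs.1.le (fun u hu => hfnonneg s u hu.2)
  have hbint : IntegrableOn (fun s : ℝ => 2 * H * |Δ| ^ θ * C2 * s ^ (α' - γ))
      (Set.Ioc 0 t) volume := by
    have := (intervalIntegral.intervalIntegrable_rpow' hαγ (a := 0) (b := t)).const_mul
      (2 * H * |Δ| ^ θ * C2)
    exact (intervalIntegrable_iff_integrableOn_Ioc_of_le ht0).mp this
  rw [intervalIntegral.integral_of_le ht0]
  have step1 : (∫ s in Set.Ioc (0:ℝ) t, ∫ r in (0:ℝ)..s, f s r)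
      ≤ ∫ s in Set.Ioc (0:ℝ) t, 2 * H * |Δ| ^ θ * C2 * s ^ (α' - γ) := by
    refine integral_mono_of_nonneg ?_ hbint ?_
    · filter_upwards [ae_restrict_mem measurableSet_Ioc] with s hs
      exact hFnonneg s hs
    · filter_upwards [ae_restrict_mem measurableSet_Ioc] with s hs
      exact inner s hs.1
  refine step1.trans ?_
  rw [← intervalIntegral.integral_of_le ht0]
  rw [intervalIntegral.integral_const_mul]
  rw [integral_rpow (Or.inl hαγ)]
  rw [Real.zero_rpow (by linarith : α' - γ + 1 ≠ 0)]
  have htT' : t ^ (α' - γ + 1) ≤ T ^ (α' - γ + 1) :=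
    Real.rpow_le_rpow ht0 htT (by linarith)
  have hden : (0:ℝ) < α' - γ + 1 := by linarith
  have hΔnn : (0:ℝ) ≤ |Δ| ^ θ := Real.rpow_nonneg (abs_nonneg _) _
  rw [show 2 * H * C2 * T ^ (α' - γ + 1) / (α' - γ + 1) * |Δ| ^ θ
      = 2 * H * |Δ| ^ θ * C2 * (T ^ (α' - γ + 1) / (α' - γ + 1)) by ring]
  have hcnn : (0:ℝ) ≤ 2 * H * |Δ| ^ θ * C2 :=
    mul_nonneg (mul_nonneg (by linarith) hΔnn) hC2pos.le
  rw [sub_zero]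
  refine mul_le_mul_of_nonneg_left ?_ hcnn
  exact div_le_div_of_nonneg_right htT' hden.le
end

section
/- Let $H\in(0,1/2)$, $0<\alpha'<1$, $0<\beta<2H$ with $\alpha'+\beta>1$, and $T>0$. Then there is a constant $C$ such that for all $0<\Delta<t\le T$: $\int_0^{t-\Delta}\int_0^u \frac{|h'(v)-h'(v+\Delta)|}{(u-v)^{1-\alpha'}}\,dv\,du \le C\,\Delta^{\beta}$, where $h'(v)=2H v^{2H-1}$ for $v>0$. -/
open Real MeasureTheory

-- key pointwise bound: v^p - (v+Δ)^p ≤ Δ^β v^{p-β}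
lemma stmt16_key {p β v Δ : ℝ} (hp0 : -1 < p) (hp1 : p < 0) (hβ0 : 0 < β) (hβ1 : β ≤ 1)
    (hv : 0 < v) (hΔ : 0 < Δ) : v ^ p - (v + Δ) ^ p ≤ Δ ^ β * v ^ (p - β) := by
  rcases le_or_gt v Δ with h | h
  · have h1 : (0:ℝ) ≤ (v + Δ) ^ p := rpow_nonneg (by linarith) p
    have h2 : v ^ p = v ^ β * v ^ (p - β) := by
      rw [← rpow_add hv]; ring_nf
    have h3 : v ^ β ≤ Δ ^ β := rpow_le_rpow hv.le h hβ0.le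
    have h4 : (0:ℝ) ≤ v ^ (p - β) := rpow_nonneg hv.le _
    nlinarith
  · set x := Δ / v with hxdef
    have hx0 : 0 < x := div_pos hΔ hv
    have hx1 : x < 1 := (div_lt_one hv).mpr h
    have h1x : (1:ℝ) ≤ 1 + x := by linarith
    have hvd : v + Δ = v * (1 + x) := by
      rw [hxdef]; field_simp
    have h2 : 1 - x ≤ (1 + x) ^ p := by
      have ha : (1+x) ^ (-1:ℝ) ≤ (1+x) ^ p := rpow_le_rpow_of_exponent_le h1x (by linarith)
      have hb : (1+x) ^ (-1:ℝ) = (1+x)⁻¹ := rpow_neg_one _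
      have hc : 1 - x ≤ (1+x)⁻¹ := by
        have h0 : (0:ℝ) < 1 + x := by linarith
        have h1 : (1+x) * (1+x)⁻¹ = 1 := mul_inv_cancel₀ h0.ne'
        have h2 : (0:ℝ) < (1+x)⁻¹ := inv_pos.mpr h0
        nlinarith
      linarith
    have hxb : x ≤ x ^ β := by
      have := rpow_le_rpow_of_exponent_ge hx0 hx1.le hβ1
      simpa using this
    have hvp : (0:ℝ) ≤ v ^ p := rpow_nonneg hv.le _
    calc v ^ p - (v + Δ) ^ p = v ^ p * (1 - (1 + x) ^ p) := by
          rw [hvd, mul_rpow hv.le (by linarith)]; ring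
      _ ≤ v ^ p * x := by nlinarith
      _ ≤ v ^ p * x ^ β := by nlinarith
      _ = Δ ^ β * v ^ (p - β) := by
          rw [hxdef, div_rpow hΔ.le hv.le, rpow_sub hv]
          field_simp

lemma stmt16_inner (H α' β : ℝ) (hH0 : 0 < H) (hH : H < 1/2)
    (hα'0 : 0 < α') (hα'1 : α' < 1) (hβ0 : 0 < β) (hβH : β < 2 * H)
    {u Δ : ℝ} (hu : 0 < u) (hΔ : 0 < Δ) :
    (∫ v in (0:ℝ)..u,
        |2 * H * v ^ (2 * H - 1) - 2 * H * (v + Δ) ^ (2 * H - 1)| / (u - v) ^ (1 - α'))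
      ≤ 2 * H * Δ ^ β * ((2:ℝ) ^ (1 - α') / (2 * H - β) + (2:ℝ) ^ (1 + β - 2 * H) / α')
          * u ^ (2 * H - β + α' - 1) := by
  have hβ1 : β ≤ 1 := by linarith
  have h2Hβ : 0 < 2 * H - β := by linarith
  set g : ℝ → ℝ := fun v => 2 * H * Δ ^ β *
      ((u/2) ^ (α' - 1) * v ^ (2 * H - 1 - β) + (u/2) ^ (2 * H - 1 - β) * (u - v) ^ (α' - 1))
    with hg
  have hu2 : (0:ℝ) < u / 2 := by linarith
  -- integrability of g
  have i1 : IntervalIntegrable (fun v : ℝ => v ^ (2 * H - 1 - β)) volume 0 u :=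
    intervalIntegral.intervalIntegrable_rpow' (by linarith)
  have i2 : IntervalIntegrable (fun v : ℝ => (u - v) ^ (α' - 1)) volume 0 u := by
    have h := (intervalIntegral.intervalIntegrable_rpow' (r := α' - 1) (by linarith) (a := 0) (b := u)).comp_sub_left u
    simpa using h.symm
  have hgint : IntervalIntegrable g volume 0 u := by
    apply IntervalIntegrable.const_mul
    exact ((i1.const_mul _).add (i2.const_mul _))
  -- pointwise bound on Ioc 0 u
  have hpt : ∀ v ∈ Set.Ioc (0:ℝ) u,
      |2 * H * v ^ (2 * H - 1) - 2 * H * (v + Δ) ^ (2 * H - 1)| / (u - v) ^ (1 - α') ≤ g v := by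
    intro v hv
    obtain ⟨hv0, hvu⟩ := hv
    have huv : (0:ℝ) ≤ u - v := by linarith
    have habs : |2 * H * v ^ (2 * H - 1) - 2 * H * (v + Δ) ^ (2 * H - 1)|
        = 2 * H * (v ^ (2 * H - 1) - (v + Δ) ^ (2 * H - 1)) := by
      rw [← mul_sub, abs_of_nonneg]
      exact mul_nonneg (by linarith)
        (sub_nonneg.mpr (rpow_le_rpow_of_nonpos hv0 (by linarith) (by linarith)))
    have hkey : v ^ (2 * H - 1) - (v + Δ) ^ (2 * H - 1) ≤ Δ ^ β * v ^ (2 * H - 1 - β) :=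
      stmt16_key (by linarith) (by linarith) hβ0 hβ1 hv0 hΔ
    have hrw : |2 * H * v ^ (2 * H - 1) - 2 * H * (v + Δ) ^ (2 * H - 1)| / (u - v) ^ (1 - α')
        = |2 * H * v ^ (2 * H - 1) - 2 * H * (v + Δ) ^ (2 * H - 1)| * (u - v) ^ (α' - 1) := by
      rw [div_eq_mul_inv, ← rpow_neg huv, show -(1 - α') = α' - 1 by ring]
    rw [hrw, habs]
    have hd0 : (0:ℝ) ≤ (u - v) ^ (α' - 1) := rpow_nonneg huv _
    have hb1 : 2 * H * (v ^ (2 * H - 1) - (v + Δ) ^ (2 * H - 1))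
        ≤ 2 * H * Δ ^ β * v ^ (2 * H - 1 - β) := by nlinarith
    have hbn : (0:ℝ) ≤ 2 * H * (v ^ (2 * H - 1) - (v + Δ) ^ (2 * H - 1)) := by
      rw [← habs]; exact abs_nonneg _
    have hc0 : (0:ℝ) ≤ 2 * H * Δ ^ β :=
      mul_nonneg (by linarith) (rpow_nonneg hΔ.le _)
    rcases le_or_gt v (u/2) with hc | hc
    · have ht : (u - v) ^ (α' - 1) ≤ (u/2) ^ (α' - 1) :=
        rpow_le_rpow_of_nonpos hu2 (by linarith) (by linarith)
      have hterm2 : (0:ℝ) ≤ (u/2) ^ (2 * H - 1 - β) * (u - v) ^ (α' - 1) :=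
        mul_nonneg (rpow_nonneg hu2.le _) hd0
      have hvn : (0:ℝ) ≤ v ^ (2 * H - 1 - β) := rpow_nonneg hv0.le _
      calc 2 * H * (v ^ (2 * H - 1) - (v + Δ) ^ (2 * H - 1)) * (u - v) ^ (α' - 1)
          ≤ (2 * H * Δ ^ β * v ^ (2 * H - 1 - β)) * (u/2) ^ (α' - 1) := by
            apply mul_le_mul hb1 ht hd0 (by positivity)
        _ ≤ g v := by rw [hg]; nlinarith [mul_nonneg hc0 hterm2]
    · have hvb : v ^ (2 * H - 1 - β) ≤ (u/2) ^ (2 * H - 1 - β) :=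
        rpow_le_rpow_of_nonpos hu2 (by linarith) (by linarith)
      have hterm1 : (0:ℝ) ≤ (u/2) ^ (α' - 1) * v ^ (2 * H - 1 - β) :=
        mul_nonneg (rpow_nonneg hu2.le _) (rpow_nonneg hv0.le _)
      calc 2 * H * (v ^ (2 * H - 1) - (v + Δ) ^ (2 * H - 1)) * (u - v) ^ (α' - 1)
          ≤ (2 * H * Δ ^ β * (u/2) ^ (2 * H - 1 - β)) * (u - v) ^ (α' - 1) := by
            apply mul_le_mul_of_nonneg_right _ hd0
            calc 2 * H * (v ^ (2 * H - 1) - (v + Δ) ^ (2 * H - 1))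
                ≤ 2 * H * Δ ^ β * v ^ (2 * H - 1 - β) := hb1
              _ ≤ 2 * H * Δ ^ β * (u/2) ^ (2 * H - 1 - β) := by nlinarith
        _ ≤ g v := by rw [hg]; nlinarith [mul_nonneg hc0 hterm1]
  -- monotonicity step
  have hmono : (∫ v in (0:ℝ)..u,
      |2 * H * v ^ (2 * H - 1) - 2 * H * (v + Δ) ^ (2 * H - 1)| / (u - v) ^ (1 - α'))
      ≤ ∫ v in (0:ℝ)..u, g v := by
    rw [intervalIntegral.integral_of_le hu.le, intervalIntegral.integral_of_le hu.le]
    apply integral_mono_of_nonneg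
    · filter_upwards [ae_restrict_mem measurableSet_Ioc] with v hv
      have huv : (0:ℝ) ≤ u - v := by linarith [hv.2]
      positivity
    · exact (intervalIntegrable_iff_integrableOn_Ioc_of_le hu.le).mp hgint
    · filter_upwards [ae_restrict_mem measurableSet_Ioc] with v hv
      exact hpt v hv
  refine hmono.trans ?_
  -- compute the integral of g
  have e1 : (∫ v in (0:ℝ)..u, v ^ (2 * H - 1 - β)) = u ^ (2 * H - β) / (2 * H - β) := by
    rw [integral_rpow (Or.inl (by linarith))]
    rw [show 2 * H - 1 - β + 1 = 2 * H - β by ring, zero_rpow (by linarith), sub_zero]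
  have e2 : (∫ v in (0:ℝ)..u, (u - v) ^ (α' - 1)) = u ^ α' / α' := by
    rw [intervalIntegral.integral_comp_sub_left (fun s => s ^ (α' - 1)) u]
    simp only [sub_self, sub_zero]
    rw [integral_rpow (Or.inl (by linarith))]
    rw [show α' - 1 + 1 = α' by ring, zero_rpow (by linarith), sub_zero]
  have hsplit : (∫ v in (0:ℝ)..u, g v) = 2 * H * Δ ^ β *
      ((u/2) ^ (α' - 1) * (u ^ (2 * H - β) / (2 * H - β))
        + (u/2) ^ (2 * H - 1 - β) * (u ^ α' / α')) := by
    rw [hg]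
    rw [intervalIntegral.integral_const_mul]
    rw [intervalIntegral.integral_add (i1.const_mul _) (i2.const_mul _)]
    rw [intervalIntegral.integral_const_mul, intervalIntegral.integral_const_mul, e1, e2]
  rw [hsplit]
  -- final algebra
  have h2 : (0:ℝ) < 2 := two_pos
  have q1 : (u/2) ^ (α' - 1) * u ^ (2 * H - β) = (2:ℝ) ^ (1 - α') * u ^ (2 * H - β + α' - 1) := by
    rw [div_rpow hu.le h2.le, div_mul_eq_mul_div, ← rpow_add hu,
      show α' - 1 + (2 * H - β) = 2 * H - β + α' - 1 by ring,
      div_eq_iff (ne_of_gt (rpow_pos_of_pos h2 _)), mul_assoc, mul_comm ((2:ℝ) ^ (1 - α')),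
      mul_assoc, ← rpow_add h2, show α' - 1 + (1 - α') = 0 by ring, rpow_zero, mul_one]
  have q2 : (u/2) ^ (2 * H - 1 - β) * u ^ α'
      = (2:ℝ) ^ (1 + β - 2 * H) * u ^ (2 * H - β + α' - 1) := by
    rw [div_rpow hu.le h2.le, div_mul_eq_mul_div, ← rpow_add hu,
      show 2 * H - 1 - β + α' = 2 * H - β + α' - 1 by ring,
      div_eq_iff (ne_of_gt (rpow_pos_of_pos h2 _)), mul_assoc,
      mul_comm ((2:ℝ) ^ (1 + β - 2 * H)), mul_assoc, ← rpow_add h2,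
      show 2 * H - 1 - β + (1 + β - 2 * H) = 0 by ring, rpow_zero, mul_one]
  have expand : (u/2) ^ (α' - 1) * (u ^ (2 * H - β) / (2 * H - β))
        + (u/2) ^ (2 * H - 1 - β) * (u ^ α' / α')
      = ((2:ℝ) ^ (1 - α') / (2 * H - β) + (2:ℝ) ^ (1 + β - 2 * H) / α')
          * u ^ (2 * H - β + α' - 1) := by
    rw [← mul_div_assoc, ← mul_div_assoc, q1, q2]
    ring
  rw [mul_assoc, expand]
  exact le_of_eq (by ring)

theorem stmt16 (H T α' β : ℝ) (hH0 : 0 < H) (hH : H < 1/2) (hT : 0 < T)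
    (hα'0 : 0 < α') (hα'1 : α' < 1) (hβ0 : 0 < β) (hβH : β < 2 * H)
    (hαβ : 1 < α' + β) :
    ∃ C > 0, ∀ (Δ t : ℝ), 0 < Δ → Δ < t → t ≤ T →
      (∫ u in (0:ℝ)..(t - Δ), ∫ v in (0:ℝ)..u,
          |2 * H * v ^ (2 * H - 1) - 2 * H * (v + Δ) ^ (2 * H - 1)|
            / (u - v) ^ (1 - α'))
        ≤ C * Δ ^ β := by
  have h2Hβ : 0 < 2 * H - β := by linarith
  have hγ : 0 < 2 * H - β + α' := by linarith
  have hK : 0 < (2:ℝ) ^ (1 - α') / (2 * H - β) + (2:ℝ) ^ (1 + β - 2 * H) / α' :=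
    add_pos (div_pos (rpow_pos_of_pos two_pos _) h2Hβ)
      (div_pos (rpow_pos_of_pos two_pos _) hα'0)
  refine ⟨2 * H * ((2:ℝ) ^ (1 - α') / (2 * H - β) + (2:ℝ) ^ (1 + β - 2 * H) / α')
      * T ^ (2 * H - β + α') / (2 * H - β + α'), ?_, ?_⟩
  · exact div_pos (mul_pos (mul_pos (by linarith) hK) (rpow_pos_of_pos hT _)) hγ
  intro Δ t hΔ hΔt htT
  have h0 : (0:ℝ) ≤ t - Δ := by linarith
  have hgi : IntervalIntegrable (fun u : ℝ =>
      2 * H * Δ ^ β * ((2:ℝ) ^ (1 - α') / (2 * H - β) + (2:ℝ) ^ (1 + β - 2 * H) / α')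
        * u ^ (2 * H - β + α' - 1)) volume 0 (t - Δ) :=
    (intervalIntegral.intervalIntegrable_rpow' (by linarith)).const_mul _
  have hmono : (∫ u in (0:ℝ)..(t - Δ), ∫ v in (0:ℝ)..u,
          |2 * H * v ^ (2 * H - 1) - 2 * H * (v + Δ) ^ (2 * H - 1)| / (u - v) ^ (1 - α'))
      ≤ ∫ u in (0:ℝ)..(t - Δ),
          2 * H * Δ ^ β * ((2:ℝ) ^ (1 - α') / (2 * H - β) + (2:ℝ) ^ (1 + β - 2 * H) / α')
            * u ^ (2 * H - β + α' - 1) := by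
    rw [intervalIntegral.integral_of_le h0, intervalIntegral.integral_of_le h0]
    apply integral_mono_of_nonneg
    · filter_upwards [ae_restrict_mem measurableSet_Ioc] with u hu
      apply intervalIntegral.integral_nonneg hu.1.le
      intro v hv
      have huv : (0:ℝ) ≤ u - v := by linarith [hv.2]
      positivity
    · exact (intervalIntegrable_iff_integrableOn_Ioc_of_le h0).mp hgi
    · filter_upwards [ae_restrict_mem measurableSet_Ioc] with u hu
      exact stmt16_inner H α' β hH0 hH hα'0 hα'1 hβ0 hβH hu.1 hΔ
  refine hmono.trans ?_
  rw [intervalIntegral.integral_const_mul,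
    integral_rpow (Or.inl (by linarith)),
    show 2 * H - β + α' - 1 + 1 = 2 * H - β + α' by ring, zero_rpow hγ.ne', sub_zero]
  have hTγ : (t - Δ) ^ (2 * H - β + α') ≤ T ^ (2 * H - β + α') :=
    rpow_le_rpow h0 (by linarith) hγ.le
  have hcn : (0:ℝ) ≤ 2 * H * Δ ^ β
      * ((2:ℝ) ^ (1 - α') / (2 * H - β) + (2:ℝ) ^ (1 + β - 2 * H) / α') :=
    mul_nonneg (mul_nonneg (by linarith) (rpow_nonneg hΔ.le _)) hK.le
  have hstep : 2 * H * Δ ^ β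
        * ((2:ℝ) ^ (1 - α') / (2 * H - β) + (2:ℝ) ^ (1 + β - 2 * H) / α')
        * ((t - Δ) ^ (2 * H - β + α') / (2 * H - β + α'))
      ≤ 2 * H * Δ ^ β
        * ((2:ℝ) ^ (1 - α') / (2 * H - β) + (2:ℝ) ^ (1 + β - 2 * H) / α')
        * (T ^ (2 * H - β + α') / (2 * H - β + α')) :=
    mul_le_mul_of_nonneg_left (by gcongr) hcn
  exact hstep.trans (le_of_eq (by ring))
end

section
/- Let $H\in(0,1/2)$, $0<\beta_1,\beta_2<1$ with $\beta_1+\beta_2<2H$, and $\alpha'\in(0,1)$ with $\alpha'+\beta_1>1$. Then there is a constant $C$ such that for all $0\le r<s$: $\int_r^s \frac{|h'(r-\Delta)-h'(u-\Delta)-h'(r)+h'(u)|}{(u-r)^{2-\alpha'}}\,du \le C\, r^{2H-1-\beta_1-\beta_2}\,(s-r)^{\alpha'+\beta_1-1}\,|\Delta|^{\beta_2}$ for every $\Delta\le 0$, where $h'(v)=2H\,\mathrm{sign}(v)|v|^{2H-1}$. -/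
open Real MeasureTheory

lemma aux_diff (γ a b : ℝ) (hγ : γ < 0) (ha : 0 < a) (hab : a ≤ b) :
    |a ^ γ - b ^ γ| ≤ (-γ) * a ^ (γ - 1) * (b - a) := by
  rcases eq_or_lt_of_le hab with rfl | hlt
  · simp
  have hb : 0 < b := ha.trans_le hab
  have hmono : b ^ γ ≤ a ^ γ := Real.rpow_le_rpow_of_nonpos ha hab hγ.le
  obtain ⟨c, hc, hcd⟩ := exists_hasDerivAt_eq_slope (fun x => x ^ γ)
      (fun x => γ * x ^ (γ - 1)) hlt
      (by
        apply ContinuousOn.rpow_const continuousOn_id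
        intro x hx
        exact Or.inl (ne_of_gt (lt_of_lt_of_le ha hx.1)))
      (fun x hx => Real.hasDerivAt_rpow_const (Or.inl (ne_of_gt (ha.trans hx.1))))
  have hcp : a < c := hc.1
  rw [abs_of_nonneg (by linarith)]
  have h1 : γ * c ^ (γ - 1) * (b - a) = b ^ γ - a ^ γ := by
    rw [hcd]; rw [div_mul_cancel₀ _ (by linarith : b - a ≠ 0)]
  have h2 : a ^ γ - b ^ γ = (-γ) * c ^ (γ - 1) * (b - a) := by linarith
  rw [h2]
  have hcb : c ^ (γ - 1) ≤ a ^ (γ - 1) :=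
    Real.rpow_le_rpow_of_nonpos ha hcp.le (by linarith)
  have hγ' : (0:ℝ) ≤ -γ := by linarith
  have hba : (0:ℝ) ≤ b - a := by linarith
  exact mul_le_mul_of_nonneg_right (mul_le_mul_of_nonneg_left hcb hγ') hba

lemma aux_interp_s19 (D A B E β₁ β₂ : ℝ) (hβ₁ : 0 ≤ β₁) (hβ₂ : 0 ≤ β₂) (hs : β₁ + β₂ ≤ 1)
    (hD : 0 ≤ D) (hA : 0 ≤ A) (hB : 0 ≤ B) (hE : 0 ≤ E)
    (h1 : D ≤ A) (h2 : D ≤ B) (h3 : D ≤ E) :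
    D ≤ A ^ β₁ * B ^ β₂ * E ^ (1 - β₁ - β₂) := by
  rcases eq_or_lt_of_le hD with rfl | hDp
  · positivity
  calc D = D ^ β₁ * D ^ β₂ * D ^ (1 - β₁ - β₂) := by
        rw [← Real.rpow_add hDp, ← Real.rpow_add hDp]
        norm_num
    _ ≤ A ^ β₁ * B ^ β₂ * E ^ (1 - β₁ - β₂) := by
        have g1 := Real.rpow_le_rpow hD h1 hβ₁
        have g2 := Real.rpow_le_rpow hD h2 hβ₂
        have g3 := Real.rpow_le_rpow hD h3 (by linarith : (0:ℝ) ≤ 1 - β₁ - β₂)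
        have := Real.rpow_nonneg hD
        exact mul_le_mul (mul_le_mul g1 g2 (this _) (Real.rpow_nonneg hA _)) g3 (this _)
          (by positivity)

lemma aux_pointwise (γ β₁ β₂ : ℝ) (hγ0 : -1 < γ) (hγ1 : γ < 0)
    (hβ₁ : 0 < β₁) (hβ₂ : 0 < β₂) (hs : β₁ + β₂ ≤ 1)
    (r u δ : ℝ) (hr : 0 < r) (hru : r ≤ u) (hδ : 0 ≤ δ) :
    |(r + δ) ^ γ - (u + δ) ^ γ - r ^ γ + u ^ γ| ≤
      ((2 * (-γ)) ^ (β₁ + β₂) * 4 ^ (1 - β₁ - β₂)) * r ^ (γ - β₁ - β₂)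
        * (u - r) ^ β₁ * δ ^ β₂ := by
  have hγ' : (0:ℝ) < -γ := by linarith
  have hu : 0 < u := hr.trans_le hru
  have hur : 0 ≤ u - r := by linarith
  have hrd : 0 < r + δ := by linarith
  have hud : 0 < u + δ := by linarith
  set D := |(r + δ) ^ γ - (u + δ) ^ γ - r ^ γ + u ^ γ| with hDdef
  have anti : ∀ x y : ℝ, 0 < x → x ≤ y → y ^ (γ - 1) ≤ x ^ (γ - 1) :=
    fun x y hx hxy => Real.rpow_le_rpow_of_nonpos hx hxy (by linarith)
  -- bound 1
  have h1 : D ≤ 2 * (-γ) * r ^ (γ - 1) * (u - r) := by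
    have t1 := aux_diff γ (r + δ) (u + δ) hγ1 hrd (by linarith)
    have t2 := aux_diff γ r u hγ1 hr hru
    have t3 : (r + δ) ^ (γ - 1) ≤ r ^ (γ - 1) := anti r (r + δ) hr (by linarith)
    have e : (r + δ) ^ γ - (u + δ) ^ γ - r ^ γ + u ^ γ =
        ((r + δ) ^ γ - (u + δ) ^ γ) - (r ^ γ - u ^ γ) := by ring
    calc D ≤ |(r + δ) ^ γ - (u + δ) ^ γ| + |r ^ γ - u ^ γ| := by
          rw [hDdef, e]; exact abs_sub _ _
      _ ≤ (-γ) * (r + δ) ^ (γ - 1) * (u + δ - (r + δ)) + (-γ) * r ^ (γ - 1) * (u - r) := by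
          gcongr
      _ ≤ 2 * (-γ) * r ^ (γ - 1) * (u - r) := by
          have : u + δ - (r + δ) = u - r := by ring
          rw [this]
          nlinarith [mul_le_mul_of_nonneg_right (mul_le_mul_of_nonneg_left t3 hγ'.le) hur]
  -- bound 2
  have h2 : D ≤ 2 * (-γ) * r ^ (γ - 1) * δ := by
    have t1 := aux_diff γ r (r + δ) hγ1 hr (by linarith)
    have t2 := aux_diff γ u (u + δ) hγ1 hu (by linarith)
    have t3 : u ^ (γ - 1) ≤ r ^ (γ - 1) := anti r u hr hru
    have e : (r + δ) ^ γ - (u + δ) ^ γ - r ^ γ + u ^ γ =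
        -((r ^ γ - (r + δ) ^ γ) - (u ^ γ - (u + δ) ^ γ)) := by ring
    have e1 : r + δ - r = δ := by ring
    have e2 : u + δ - u = δ := by ring
    rw [e1] at t1; rw [e2] at t2
    calc D ≤ |r ^ γ - (r + δ) ^ γ| + |u ^ γ - (u + δ) ^ γ| := by
          rw [hDdef, e, abs_neg]; exact abs_sub _ _
      _ ≤ (-γ) * r ^ (γ - 1) * δ + (-γ) * u ^ (γ - 1) * δ := by gcongr
      _ ≤ 2 * (-γ) * r ^ (γ - 1) * δ := by
          nlinarith [mul_le_mul_of_nonneg_right (mul_le_mul_of_nonneg_left t3 hγ'.le) hδ]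
  -- bound 3
  have h3 : D ≤ 4 * r ^ γ := by
    have m : ∀ x : ℝ, r ≤ x → x ^ γ ≤ r ^ γ := fun x hx =>
      Real.rpow_le_rpow_of_nonpos hr hx hγ1.le
    have n : ∀ x : ℝ, 0 < x → (0:ℝ) ≤ x ^ γ := fun x hx => (Real.rpow_pos_of_pos hx γ).le
    have b1 := m (r + δ) (by linarith); have b2 := m (u + δ) (by linarith)
    have b3 := m u hru
    have n1 := n (r + δ) hrd; have n2 := n (u + δ) hud; have n3 := n u hu; have n4 := n r hr
    rw [hDdef, abs_le]; constructor <;> nlinarith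
  have key := aux_interp_s19 D _ _ _ β₁ β₂ hβ₁.le hβ₂.le hs (abs_nonneg _)
    (by positivity) (by positivity) (by positivity) h1 h2 h3
  refine key.trans (le_of_eq ?_)
  have hK : (0:ℝ) ≤ 2 * (-γ) * r ^ (γ - 1) := by positivity
  have f1 : (2 * (-γ) * r ^ (γ - 1) * (u - r)) ^ β₁
      = (2 * (-γ)) ^ β₁ * r ^ ((γ - 1) * β₁) * (u - r) ^ β₁ := by
    rw [Real.mul_rpow hK hur,
      Real.mul_rpow (by positivity : (0:ℝ) ≤ 2 * (-γ)) (Real.rpow_nonneg hr.le (γ-1)),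
      ← Real.rpow_mul hr.le]
  have f2 : (2 * (-γ) * r ^ (γ - 1) * δ) ^ β₂
      = (2 * (-γ)) ^ β₂ * r ^ ((γ - 1) * β₂) * δ ^ β₂ := by
    rw [Real.mul_rpow hK hδ,
      Real.mul_rpow (by positivity : (0:ℝ) ≤ 2 * (-γ)) (Real.rpow_nonneg hr.le (γ-1)),
      ← Real.rpow_mul hr.le]
  have f3 : ((4:ℝ) * r ^ γ) ^ (1 - β₁ - β₂)
      = (4:ℝ) ^ (1 - β₁ - β₂) * r ^ (γ * (1 - β₁ - β₂)) := by
    rw [Real.mul_rpow (by positivity : (0:ℝ) ≤ 4) (Real.rpow_nonneg hr.le γ),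
      ← Real.rpow_mul hr.le]
  rw [f1, f2, f3,
    show (2 * (-γ)) ^ (β₁ + β₂) = (2 * (-γ)) ^ β₁ * (2 * (-γ)) ^ β₂ from
      Real.rpow_add (by positivity) _ _,
    show r ^ (γ - β₁ - β₂)
        = r ^ ((γ - 1) * β₁) * (r ^ ((γ - 1) * β₂) * r ^ (γ * (1 - β₁ - β₂))) by
      rw [← Real.rpow_add hr, ← Real.rpow_add hr]; congr 1; ring]
  ring

set_option maxHeartbeats 2000000 in
theorem stmt19 (H β₁ β₂ α' : ℝ) (hH0 : 0 < H) (hH : H < 1/2)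
    (hβ₁0 : 0 < β₁) (hβ₁1 : β₁ < 1) (hβ₂0 : 0 < β₂) (hβ₂1 : β₂ < 1)
    (hββ : β₁ + β₂ < 2 * H) (hα'0 : 0 < α') (hα'1 : α' < 1) (hαβ : 1 < α' + β₁) :
    ∃ C > 0, ∀ (r s Δ : ℝ), 0 ≤ r → r < s → Δ ≤ 0 →
      (let h' : ℝ → ℝ := fun x => 2 * H * Real.sign x * |x| ^ (2 * H - 1)
      (∫ u in r..s, |h' (r - Δ) - h' (u - Δ) - h' r + h' u| / (u - r) ^ (2 - α'))
        ≤ C * r ^ (2 * H - 1 - β₁ - β₂) * (s - r) ^ (α' + β₁ - 1) * |Δ| ^ β₂) := by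
  have h2H : 0 < 1 - 2 * H := by linarith
  set γ : ℝ := 2 * H - 1 with hγdef
  set C₀ : ℝ := (2 * (1 - 2 * H)) ^ (β₁ + β₂) * 4 ^ (1 - β₁ - β₂) with hC₀def
  have hC₀ : 0 < C₀ := by
    apply mul_pos <;> apply Real.rpow_pos_of_pos <;> norm_num
    linarith
  set C : ℝ := 2 * H * C₀ / (α' + β₁ - 1) with hCdef
  have hC : 0 < C := by
    apply div_pos (by positivity) (by linarith)
  refine ⟨C, hC, ?_⟩
  intro r s Δ hr hrs hΔ
  intro h'
  set δ : ℝ := -Δ with hδdef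
  have hδ0 : 0 ≤ δ := by simp [hδdef]; linarith
  have habsΔ : |Δ| = δ := abs_of_nonpos hΔ
  have hpos : ∀ x : ℝ, 0 < x → h' x = 2 * H * x ^ γ := by
    intro x hx
    simp only [h', Real.sign_of_pos hx, abs_of_pos hx, mul_one, hγdef]
  rcases eq_or_lt_of_le hr with rfl | hrpos
  · -- r = 0
    rcases eq_or_lt_of_le hΔ with rfl | hΔneg
    · -- Δ = 0
      have : ∀ u : ℝ, |h' (0 - 0) - h' (u - 0) - h' 0 + h' u| / (u - 0) ^ (2 - α') = 0 := by
        intro u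
        have : h' (0 - 0) - h' (u - 0) - h' 0 + h' u = 0 := by ring_nf
        rw [this]; simp
      rw [show (∫ u in (0:ℝ)..s, |h' (0 - 0) - h' (u - 0) - h' 0 + h' u| / (u - 0) ^ (2 - α'))
            = ∫ u in (0:ℝ)..s, (0:ℝ) from intervalIntegral.integral_congr (fun u _ => this u)]
      simp [Real.zero_rpow (ne_of_gt hβ₂0)]
    · -- Δ < 0
      have hnotint : ¬ IntervalIntegrable
          (fun u => |h' (0 - Δ) - h' (u - Δ) - h' 0 + h' u| / (u - 0) ^ (2 - α'))
          volume 0 s := by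
        intro hI
        set q : ℝ := 2 * H + α' - 3 with hq
        have hq1 : q < -1 := by simp [hq]; linarith
        have hIoo : IntegrableOn
            (fun u => (2 * H)⁻¹ * (|h' (0 - Δ) - h' (u - Δ) - h' 0 + h' u| / (u - 0) ^ (2 - α')))
            (Set.Ioo 0 s) volume := by
          have := (hI.const_mul (2 * H)⁻¹).1
          exact (this.mono_set Set.Ioo_subset_Ioc_self)
        have hmeas : AEStronglyMeasurable (fun u : ℝ => u ^ q)
            (volume.restrict (Set.Ioo (0:ℝ) s)) :=
          (Measurable.aestronglyMeasurable (by measurability))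
        have hbound : ∀ᵐ u ∂(volume.restrict (Set.Ioo (0:ℝ) s)),
            ‖(fun u : ℝ => u ^ q) u‖ ≤
              ‖(2 * H)⁻¹ * (|h' (0 - Δ) - h' (u - Δ) - h' 0 + h' u| / (u - 0) ^ (2 - α'))‖ := by
          filter_upwards [ae_restrict_mem measurableSet_Ioo] with u hu
          have hu0 : 0 < u := hu.1
          have hδp : 0 < δ := by simp [hδdef]; linarith
          have h1 : h' (0 - Δ) = 2 * H * δ ^ γ := by
            rw [show (0:ℝ) - Δ = δ by simp [hδdef], hpos δ hδp]
          have h2 : h' (u - Δ) = 2 * H * (u + δ) ^ γ := by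
            rw [show u - Δ = u + δ by simp [hδdef]; ring, hpos (u + δ) (by linarith)]
          have h3 : h' 0 = 0 := by simp [h']
          have h4 : h' u = 2 * H * u ^ γ := hpos u hu0
          have hmono : (u + δ) ^ γ ≤ δ ^ γ :=
            Real.rpow_le_rpow_of_nonpos hδp (by linarith) (by simp [hγdef]; linarith)
          have hnum : 2 * H * u ^ γ ≤ |h' (0 - Δ) - h' (u - Δ) - h' 0 + h' u| := by
            rw [h1, h2, h3, h4]
            have n1 := Real.rpow_nonneg hδp.le γ
            have n2 := Real.rpow_nonneg (by linarith : (0:ℝ) ≤ u + δ) γ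
            have n3 := Real.rpow_nonneg hu0.le γ
            have habs : (0:ℝ) ≤ 2 * H * δ ^ γ - 2 * H * (u + δ) ^ γ - 0 + 2 * H * u ^ γ := by
              nlinarith [hmono]
            rw [abs_of_nonneg habs]
            nlinarith [hmono]
          have hden : (0:ℝ) < u ^ (2 - α') := Real.rpow_pos_of_pos hu0 _
          have hqeq : u ^ q = (2 * H)⁻¹ * ((2 * H * u ^ γ) / u ^ (2 - α')) := by
            rw [mul_div_assoc]
            rw [← mul_assoc, inv_mul_cancel₀ (by positivity : (2*H) ≠ 0), one_mul]
            rw [← Real.rpow_sub hu0]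
            congr 1
            simp [hq, hγdef]; ring
          have e0 : u - (0:ℝ) = u := sub_zero u
          rw [e0]
          have hval : (0:ℝ) ≤
              (2 * H)⁻¹ * (|h' (0 - Δ) - h' (u - Δ) - h' 0 + h' u| / u ^ (2 - α')) :=
            mul_nonneg (by positivity) (div_nonneg (abs_nonneg _) hden.le)
          rw [Real.norm_eq_abs, Real.norm_eq_abs,
            abs_of_nonneg (Real.rpow_nonneg hu0.le q), abs_of_nonneg hval, hqeq]
          have step : 2 * H * u ^ γ / u ^ (2 - α') ≤
              |h' (0 - Δ) - h' (u - Δ) - h' 0 + h' u| / u ^ (2 - α') :=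
            div_le_div_of_nonneg_right hnum hden.le
          exact mul_le_mul_of_nonneg_left step (by positivity)
        have : IntegrableOn (fun u : ℝ => u ^ q) (Set.Ioo 0 s) volume :=
          Integrable.mono hIoo hmeas hbound
        rw [intervalIntegral.integrableOn_Ioo_rpow_iff (by linarith : (0:ℝ) < s)] at this
        linarith
      rw [intervalIntegral.integral_undef hnotint]
      have hz : (0:ℝ) ^ (γ - β₁ - β₂) = 0 :=
        Real.zero_rpow (by rw [hγdef]; intro h; nlinarith)
      rw [hz]
      simp
  · -- r > 0
    set f : ℝ → ℝ := fun u => |h' (r - Δ) - h' (u - Δ) - h' r + h' u| / (u - r) ^ (2 - α')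
      with hfdef
    set p : ℝ := α' + β₁ - 2 with hpdef
    have hp1 : (-1:ℝ) < p := by simp [hpdef]; linarith
    set M : ℝ := 2 * H * C₀ * r ^ (γ - β₁ - β₂) * δ ^ β₂ with hMdef
    have hM : 0 ≤ M := by
      have := Real.rpow_pos_of_pos hrpos (γ - β₁ - β₂)
      have := Real.rpow_nonneg hδ0 β₂
      positivity
    set g : ℝ → ℝ := fun u => M * (u - r) ^ p with hgdef
    have hgint : IntervalIntegrable g volume r s := by
      have h0 : IntervalIntegrable (fun t : ℝ => t ^ p) volume 0 (s - r) :=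
        intervalIntegral.intervalIntegrable_rpow' hp1
      have h1 := (h0.comp_sub_right r)
      simp only [zero_add, sub_add_cancel] at h1
      exact h1.const_mul M
    have hfg : ∀ u ∈ Set.Icc r s, f u ≤ g u := by
      intro u hu
      rcases eq_or_lt_of_le hu.1 with rfl | hur
      · have hne : (2:ℝ) - α' ≠ 0 := by intro h; linarith
        have hpne : p ≠ 0 := by rw [hpdef]; intro h; linarith
        have hfr : f r = 0 := by
          show |h' (r - Δ) - h' (r - Δ) - h' r + h' r| / (r - r) ^ (2 - α') = 0
          rw [show h' (r - Δ) - h' (r - Δ) - h' r + h' r = 0 by ring, abs_zero, zero_div]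
        have hgr : g r = 0 := by
          show M * (r - r) ^ p = 0
          rw [sub_self, Real.zero_rpow hpne, mul_zero]
        rw [hfr, hgr]
      · have hu0 : 0 < u := hrpos.trans hur
        have hnum : |h' (r - Δ) - h' (u - Δ) - h' r + h' u| ≤ M * (u - r) ^ β₁ := by
          have h1 : h' (r - Δ) = 2 * H * (r + δ) ^ γ := by
            rw [show r - Δ = r + δ by simp [hδdef]; ring, hpos (r + δ) (by linarith)]
          have h2 : h' (u - Δ) = 2 * H * (u + δ) ^ γ := by
            rw [show u - Δ = u + δ by simp [hδdef]; ring, hpos (u + δ) (by linarith)]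
          have h3 : h' r = 2 * H * r ^ γ := hpos r hrpos
          have h4 : h' u = 2 * H * u ^ γ := hpos u hu0
          rw [h1, h2, h3, h4,
            show 2 * H * (r + δ) ^ γ - 2 * H * (u + δ) ^ γ - 2 * H * r ^ γ + 2 * H * u ^ γ
              = 2 * H * ((r + δ) ^ γ - (u + δ) ^ γ - r ^ γ + u ^ γ) by ring,
            abs_mul, abs_of_pos (by positivity : (0:ℝ) < 2 * H)]
          have key := aux_pointwise γ β₁ β₂ (by rw [hγdef]; linarith)
            (by rw [hγdef]; linarith) hβ₁0 hβ₂0 (by linarith)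
            r u δ hrpos hur.le hδ0
          rw [show -γ = 1 - 2 * H by rw [hγdef]; ring] at key
          calc 2 * H * |(r + δ) ^ γ - (u + δ) ^ γ - r ^ γ + u ^ γ|
              ≤ 2 * H * (C₀ * r ^ (γ - β₁ - β₂) * (u - r) ^ β₁ * δ ^ β₂) := by
                have h2H' : (0:ℝ) ≤ 2 * H := by linarith
                apply mul_le_mul_of_nonneg_left _ h2H'
                simpa [hC₀def] using key
            _ = M * (u - r) ^ β₁ := by rw [hMdef]; ring
        have hden : (0:ℝ) < (u - r) ^ (2 - α') := Real.rpow_pos_of_pos (by linarith) _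
        show |h' (r - Δ) - h' (u - Δ) - h' r + h' u| / (u - r) ^ (2 - α') ≤ M * (u - r) ^ p
        rw [div_le_iff₀ hden]
        calc |h' (r - Δ) - h' (u - Δ) - h' r + h' u| ≤ M * (u - r) ^ β₁ := hnum
          _ = M * (u - r) ^ p * (u - r) ^ (2 - α') := by
              have hsplit : (u - r) ^ β₁ = (u - r) ^ p * (u - r) ^ (2 - α') := by
                rw [← Real.rpow_add (by linarith : (0:ℝ) < u - r)]
                congr 1
                rw [hpdef]; ring
              rw [hsplit, hMdef]; ring
    have hgval : (∫ u in r..s, g u) = M * ((s - r) ^ (p + 1) / (p + 1)) := by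
      simp only [hgdef]
      rw [intervalIntegral.integral_const_mul]
      congr 1
      rw [intervalIntegral.integral_comp_sub_right (fun t => t ^ p) r]
      rw [sub_self, integral_rpow (Or.inl hp1)]
      rw [Real.zero_rpow (show p + 1 ≠ 0 by rw [hpdef]; intro h; linarith)]
      ring
    by_cases hInt : IntervalIntegrable f volume r s
    · calc (∫ u in r..s, f u) ≤ ∫ u in r..s, g u :=
          intervalIntegral.integral_mono_on hrs.le hInt hgint hfg
        _ = M * ((s - r) ^ (p + 1) / (p + 1)) := hgval
        _ = C * r ^ (2 * H - 1 - β₁ - β₂) * (s - r) ^ (α' + β₁ - 1) * |Δ| ^ β₂ := by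
            rw [habsΔ, hMdef, hCdef]
            rw [show p + 1 = α' + β₁ - 1 by simp [hpdef]; ring,
              show γ - β₁ - β₂ = 2 * H - 1 - β₁ - β₂ by simp [hγdef]]
            field_simp
            try ring
    · rw [intervalIntegral.integral_undef hInt]
      have h1 := Real.rpow_nonneg (by linarith : (0:ℝ) ≤ r) (2 * H - 1 - β₁ - β₂)
      have h2 := Real.rpow_nonneg (by linarith : (0:ℝ) ≤ s - r) (α' + β₁ - 1)
      have h3 := Real.rpow_nonneg (abs_nonneg Δ) β₂
      positivity
end
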